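/- arXiv:math/0009029 — 5 statements merged into one kernel-verified Lean document; each statement's English description precedes it below -/
import Mathlib

section
/- Let λ ∈ ℂ with λ ≠ 0 and λ^n ≠ λ for all integers n ≥ 2 (non-resonance). Then for every formal power series f(z) = λz + Σ_{n≥2} a_n z^n there exists a unique formal power series h(z) = z + Σ_{n≥2} h_n z^n such that h ∘ f = λ · h as formal power series. -/
open PowerSeries

/-- Composition of formal power series: `compPS g f` is `g ∘ f`
(substitute `f` into `g`); correct when `f` has zero constant term. -/
noncomputable def compPS (g f : PowerSeries ℂ) : PowerSeries ℂ :=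
  PowerSeries.mk fun n =>
    ∑ k ∈ Finset.range (n + 1), PowerSeries.coeff k g * PowerSeries.coeff n (f ^ k)

/-- Recursive coefficients of the linearizing series. -/
noncomputable def Hc (lam : ℂ) (f : PowerSeries ℂ) : ℕ → ℂ
  | 0 => 0
  | 1 => 1
  | n + 2 => (∑ k ∈ (Finset.range (n + 2)).attach,
      Hc lam f k.1 * PowerSeries.coeff (n + 2) (f ^ k.1)) / (lam - lam ^ (n + 2))
  termination_by n => n
  decreasing_by exact Finset.mem_range.mp k.2

lemma Hc_succ_succ (lam : ℂ) (f : PowerSeries ℂ) (n : ℕ) :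
    Hc lam f (n + 2) = (∑ k ∈ Finset.range (n + 2),
      Hc lam f k * PowerSeries.coeff (n + 2) (f ^ k)) / (lam - lam ^ (n + 2)) := by
  rw [Hc, Finset.sum_attach (Finset.range (n + 2))
    (fun k => Hc lam f k * PowerSeries.coeff (n + 2) (f ^ k))]

lemma coeff_pow_zero_of_lt {f : PowerSeries ℂ}
    (hf0 : PowerSeries.constantCoeff f = 0) {n k : ℕ} (h : n < k) :
    PowerSeries.coeff n (f ^ k) = 0 := by
  have hdvd : (X : PowerSeries ℂ) ^ k ∣ f ^ k :=
    pow_dvd_pow_of_dvd (PowerSeries.X_dvd_iff.mpr hf0) k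
  exact PowerSeries.X_pow_dvd_iff.mp hdvd n h

lemma coeff_pow_diag {lam : ℂ} {f : PowerSeries ℂ}
    (hf0 : PowerSeries.constantCoeff f = 0)
    (hf1 : PowerSeries.coeff 1 f = lam) (n : ℕ) :
    PowerSeries.coeff n (f ^ n) = lam ^ n := by
  obtain ⟨g, hg⟩ := PowerSeries.X_dvd_iff.mpr hf0
  have hg0 : PowerSeries.constantCoeff g = lam := by
    have := PowerSeries.coeff_succ_X_mul 0 g
    rw [← hg] at this
    rw [← PowerSeries.coeff_zero_eq_constantCoeff, ← this, hf1]
  have : f ^ n = X ^ n * g ^ n := by rw [hg, mul_pow]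
  rw [this]
  have := PowerSeries.coeff_X_pow_mul (g ^ n) n 0
  rw [zero_add] at this
  rw [this, PowerSeries.coeff_zero_eq_constantCoeff, map_pow, hg0]

/-- For a non-resonant multiplier `λ` (λ ≠ 0 and `λ^n ≠ λ` for n ≥ 2), every formal
power series `f = λ z + O(z²)` admits a unique formal linearization `h = z + O(z²)`
with `h ∘ f = λ • h`. -/
theorem formal_linearization_exists_unique (lam : ℂ) (hlam0 : lam ≠ 0)
    (hres : ∀ n : ℕ, 2 ≤ n → lam ^ n ≠ lam)
    (f : PowerSeries ℂ) (hf0 : PowerSeries.constantCoeff f = 0)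
    (hf1 : PowerSeries.coeff 1 f = lam) :
    ∃! h : PowerSeries ℂ,
      PowerSeries.constantCoeff h = 0 ∧ PowerSeries.coeff 1 h = 1 ∧
        compPS h f = lam • h := by
  have hne : ∀ n : ℕ, 2 ≤ n → lam - lam ^ n ≠ 0 := fun n hn => by
    intro h
    exact hres n hn (sub_eq_zero.mp h).symm
  -- the candidate
  set H : ℕ → ℂ := Hc lam f with hH
  have hH0 : H 0 = 0 := by rw [hH, Hc]
  have hH1 : H 1 = 1 := by rw [hH, Hc]
  refine ⟨PowerSeries.mk H, ⟨?_, ?_, ?_⟩, ?_⟩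
  · simp [hH0]
  · simp [hH1]
  · -- existence: compPS (mk H) f = lam • mk H
    ext n
    rw [compPS]
    simp only [PowerSeries.coeff_mk, PowerSeries.coeff_smul, smul_eq_mul]
    match n with
    | 0 => simp [hH0]
    | 1 =>
      rw [Finset.sum_range_succ, Finset.sum_range_one]
      simp [hH0, hH1, hf1, pow_one]
    | (m + 2) =>
      rw [Finset.sum_range_succ, coeff_pow_diag hf0 hf1, hH, Hc_succ_succ]
      field_simp [hne (m + 2) (by omega)]
      ring
  · -- uniqueness
    intro h ⟨h0, h1, hcomp⟩
    have key : ∀ n, PowerSeries.coeff n h = H n := by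
      intro n
      induction n using Nat.strong_induction_on with
      | _ n ih =>
        match n with
        | 0 => simpa [hH0] using h0
        | 1 => simpa [hH1] using h1
        | (m + 2) =>
          have hc := congrArg (PowerSeries.coeff (m + 2)) hcomp
          rw [compPS] at hc
          simp only [PowerSeries.coeff_mk, PowerSeries.coeff_smul, smul_eq_mul] at hc
          rw [Finset.sum_range_succ, coeff_pow_diag hf0 hf1] at hc
          have hsum : ∑ k ∈ Finset.range (m + 2),
              PowerSeries.coeff k h * PowerSeries.coeff (m + 2) (f ^ k)
              = ∑ k ∈ Finset.range (m + 2),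
                H k * PowerSeries.coeff (m + 2) (f ^ k) := by
            refine Finset.sum_congr rfl fun k hk => ?_
            rw [ih k (Finset.mem_range.mp hk)]
          rw [hsum] at hc
          rw [hH, Hc_succ_succ]
          have hne' := hne (m + 2) (by omega)
          rw [eq_div_iff hne']
          have : ∑ k ∈ Finset.range (m + 2), Hc lam f k * PowerSeries.coeff (m + 2) (f ^ k)
              = ∑ k ∈ Finset.range (m + 2), H k * PowerSeries.coeff (m + 2) (f ^ k) := by
            rw [hH]
          rw [this]
          linear_combination -hc
    ext n
    rw [key n, PowerSeries.coeff_mk]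
end

section
/- Let λ ∈ ℂ be non-resonant (λ ≠ 0 and λ^{n-1} ≠ 1 for all n ≥ 2), and consider the family f_t(z) = λz + t·φ(z) where φ is a formal power series with φ(z) = O(z²) and t ∈ ℂ. Then the n-th coefficient h_n(t) of the unique formal linearization h_t (with h_t(0)=0, h_t'(0)=1, h_t ∘ f_t = λ h_t) is a polynomial in t of degree at most n − 1. -/
open PowerSeries

/-- The family `f_t = λ z + t φ(z)` as a power series with polynomial
coefficients (polynomials in the parameter `t`). -/
noncomputable def Fgen (lam : ℂ) (phi : PowerSeries ℂ) : PowerSeries (Polynomial ℂ) :=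
  PowerSeries.C (Polynomial.C lam) * PowerSeries.X +
    PowerSeries.C Polynomial.X * PowerSeries.map Polynomial.C phi

lemma Fgen_map (lam t : ℂ) (phi : PowerSeries ℂ) :
    PowerSeries.map (Polynomial.evalRingHom t) (Fgen lam phi)
      = lam • PowerSeries.X + t • phi := by
  ext n
  simp [Fgen, PowerSeries.coeff_map, PowerSeries.coeff_C_mul, mul_comm]

lemma Fgen_coeff (lam : ℂ) (phi : PowerSeries ℂ) (i : ℕ) :
    PowerSeries.coeff i (Fgen lam phi)
      = (if i = 1 then Polynomial.C lam else 0)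
        + Polynomial.C (PowerSeries.coeff i phi) * Polynomial.X := by
  simp only [Fgen, map_add, PowerSeries.coeff_C_mul, PowerSeries.coeff_X,
    PowerSeries.coeff_map, mul_ite, mul_one, mul_zero]
  split <;> ring

lemma Fgen_coeff_coeff (lam : ℂ) (phi : PowerSeries ℂ)
    (hphi0 : PowerSeries.constantCoeff phi = 0)
    (hphi1 : PowerSeries.coeff 1 phi = 0)
    (i a : ℕ) (hia : i < 1 + a) :
    (PowerSeries.coeff i (Fgen lam phi)).coeff a = 0 := by
  have h0 : PowerSeries.coeff 0 phi = 0 := by simpa using hphi0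
  rw [Fgen_coeff]
  rcases Nat.lt_or_ge i 2 with hi | hi
  · interval_cases i
    · simp [h0]
    · rw [if_pos rfl, hphi1, Polynomial.C_0, zero_mul, add_zero, Polynomial.coeff_C,
        if_neg (by omega : ¬ a = 0)]
  · have hne : i ≠ 1 := by omega
    have ha : a ≠ 1 := by omega
    rw [if_neg hne, zero_add, Polynomial.coeff_C_mul, Polynomial.coeff_X,
      if_neg (by omega : ¬ 1 = a), mul_zero]

lemma Fgen_pow_coeff_coeff (lam : ℂ) (phi : PowerSeries ℂ)
    (hphi0 : PowerSeries.constantCoeff phi = 0)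
    (hphi1 : PowerSeries.coeff 1 phi = 0) (k : ℕ) :
    ∀ m j : ℕ, m < k + j →
      (PowerSeries.coeff m (Fgen lam phi ^ k)).coeff j = 0 := by
  induction k with
  | zero =>
    intro m j hmj
    rw [pow_zero, PowerSeries.coeff_one]
    rcases Nat.eq_zero_or_pos m with rfl | hm
    · have : j ≠ 0 := by omega
      simp [Polynomial.coeff_one, this]
    · simp [hm.ne']
  | succ k ih =>
    intro m j hmj
    rw [pow_succ, mul_comm, PowerSeries.coeff_mul, Polynomial.finset_sum_coeff]
    refine Finset.sum_eq_zero fun p hp => ?_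
    rw [Finset.HasAntidiagonal.mem_antidiagonal] at hp
    rw [Polynomial.coeff_mul]
    refine Finset.sum_eq_zero fun q hq => ?_
    rw [Finset.HasAntidiagonal.mem_antidiagonal] at hq
    rcases Nat.lt_or_ge p.1 (1 + q.1) with h1 | h1
    · rw [Fgen_coeff_coeff lam phi hphi0 hphi1 _ _ h1, zero_mul]
    · rcases Nat.lt_or_ge p.2 (k + q.2) with h2 | h2
      · rw [ih _ _ h2, mul_zero]
      · omega

lemma Fgen_pow_natDegree (lam : ℂ) (phi : PowerSeries ℂ)
    (hphi0 : PowerSeries.constantCoeff phi = 0)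
    (hphi1 : PowerSeries.coeff 1 phi = 0) (k m : ℕ) :
    (PowerSeries.coeff m (Fgen lam phi ^ k)).natDegree ≤ m - k := by
  rw [Polynomial.natDegree_le_iff_coeff_eq_zero]
  intro j hj
  exact Fgen_pow_coeff_coeff lam phi hphi0 hphi1 k m j (by omega)

/-- For the linear family `f_t = λ z + t φ(z)` with `λ` non-resonant and
`φ = O(z²)`, the `n`-th coefficient of the formal linearization `h_t`
(`h_t(0)=0`, `h_t'(0)=1`, `h_t ∘ f_t = λ h_t`) is a polynomial in `t`
of degree at most `n - 1`. -/
theorem linearization_coeff_polynomial_in_t (lam : ℂ) (hlam0 : lam ≠ 0)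
    (hres : ∀ n : ℕ, 2 ≤ n → lam ^ (n - 1) ≠ 1)
    (phi : PowerSeries ℂ) (hphi0 : PowerSeries.constantCoeff phi = 0)
    (hphi1 : PowerSeries.coeff 1 phi = 0)
    (h : ℂ → PowerSeries ℂ)
    (hh : ∀ t : ℂ,
      PowerSeries.constantCoeff (h t) = 0 ∧ PowerSeries.coeff 1 (h t) = 1 ∧
        compPS (h t) (lam • PowerSeries.X + t • phi) = lam • h t) :
    ∀ n : ℕ, ∃ P : Polynomial ℂ, P.natDegree ≤ n - 1 ∧
      ∀ t : ℂ, Polynomial.eval t P = PowerSeries.coeff n (h t) := by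
  intro n
  induction n using Nat.strong_induction_on with
  | _ n IH =>
  rcases n with _ | _ | m
  · exact ⟨0, by simp, fun t => by
      simp [← PowerSeries.coeff_zero_eq_constantCoeff_apply, (hh t).1]⟩
  · exact ⟨1, by simp, fun t => by simp [(hh t).2.1]⟩
  · set N := m + 2 with hN
    set c : ℕ → Polynomial ℂ :=
      fun k => PowerSeries.coeff N (Fgen lam phi ^ k) with hc
    have hceval : ∀ (t : ℂ) (k : ℕ), Polynomial.eval t (c k)
        = PowerSeries.coeff N ((lam • PowerSeries.X + t • phi) ^ k) := by
      intro t k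
      rw [← Fgen_map lam t phi]
      conv_rhs => rw [← map_pow]
      simp only [hc, PowerSeries.coeff_map, Polynomial.coe_evalRingHom]
    have hcNdeg : (c N).natDegree ≤ 0 := by
      simpa using Fgen_pow_natDegree lam phi hphi0 hphi1 N N
    have hcN : ∀ t : ℂ, Polynomial.eval t (c N) = lam ^ N := by
      intro t
      have hconst := Polynomial.eq_C_of_natDegree_le_zero hcNdeg
      have h0 : Polynomial.eval 0 (c N) = lam ^ N := by
        rw [hceval 0 N]
        simp [smul_pow, PowerSeries.coeff_X_pow]
      rw [hconst] at h0 ⊢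
      simpa using h0
    have hne : lam - lam ^ N ≠ 0 := by
      intro hz
      apply hres N (by omega)
      have hNl : lam ^ N = lam * lam ^ (N - 1) := by
        have hN1 : N - 1 + 1 = N := by omega
        conv_lhs => rw [← hN1]
        rw [pow_succ']
      have : lam * 1 = lam * lam ^ (N - 1) := by
        rw [mul_one, ← hNl]
        linear_combination hz
      exact (mul_left_cancel₀ hlam0 this).symm
    have key : ∀ t : ℂ, (lam - lam ^ N) * PowerSeries.coeff N (h t)
        = ∑ k ∈ Finset.range N, PowerSeries.coeff k (h t) * Polynomial.eval t (c k) := by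
      intro t
      have He := congrArg (PowerSeries.coeff N) (hh t).2.2
      rw [compPS] at He
      rw [PowerSeries.coeff_mk, Finset.sum_range_succ] at He
      have hsmul : PowerSeries.coeff N (lam • h t) = lam * PowerSeries.coeff N (h t) := by
        simp
      rw [hsmul] at He
      have hlast : PowerSeries.coeff N ((lam • PowerSeries.X + t • phi) ^ N)
          = lam ^ N := by rw [← hceval, hcN]
      rw [hlast] at He
      have hsum : ∑ k ∈ Finset.range N,
            PowerSeries.coeff k (h t) * PowerSeries.coeff N ((lam • PowerSeries.X + t • phi) ^ k)
          = ∑ k ∈ Finset.range N, PowerSeries.coeff k (h t) * Polynomial.eval t (c k) :=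
        Finset.sum_congr rfl fun k _ => by rw [hceval]
      rw [hsum] at He
      linear_combination -He
    have hex : ∀ k : ℕ, ∃ P : Polynomial ℂ, k < N →
        P.natDegree ≤ k - 1 ∧ ∀ t : ℂ, Polynomial.eval t P = PowerSeries.coeff k (h t) := by
      intro k
      by_cases hk : k < N
      · obtain ⟨P, h1, h2⟩ := IH k hk
        exact ⟨P, fun _ => ⟨h1, h2⟩⟩
      · exact ⟨0, fun hk' => absurd hk' hk⟩
    choose P hP using hex
    have hP0 : P 0 = 0 := by
      apply Polynomial.funext
      intro t
      rw [(hP 0 (by omega)).2 t]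
      simp [← PowerSeries.coeff_zero_eq_constantCoeff_apply, (hh t).1]
    refine ⟨Polynomial.C (lam - lam ^ N)⁻¹ * ∑ k ∈ Finset.range N, P k * c k, ?_, ?_⟩
    · refine (Polynomial.natDegree_C_mul_le _ _).trans ?_
      refine Polynomial.natDegree_sum_le_of_forall_le _ _ fun k hk => ?_
      rw [Finset.mem_range] at hk
      rcases Nat.eq_zero_or_pos k with rfl | hkpos
      · simp [hP0]
      · refine Polynomial.natDegree_mul_le.trans ?_
        have h1 := (hP k hk).1
        have h2 : (c k).natDegree ≤ N - k := Fgen_pow_natDegree lam phi hphi0 hphi1 k N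
        omega
    · intro t
      rw [Polynomial.eval_mul, Polynomial.eval_C, Polynomial.eval_finset_sum]
      have : ∑ k ∈ Finset.range N, Polynomial.eval t (P k * c k)
          = (lam - lam ^ N) * PowerSeries.coeff N (h t) := by
        rw [key t]
        refine Finset.sum_congr rfl fun k hk => ?_
        rw [Finset.mem_range] at hk
        rw [Polynomial.eval_mul, (hP k hk).2 t]
      rw [this]
      field_simp
end

section
/- Let λ = e^{2πiα} with α irrational, and suppose there exists a sequence q_k → ∞ with |λ^{q_k} − 1|^{1/q_k} → 0 faster than any geometric rate, specifically liminf_{q→∞} |λ^q − 1|^{1/q} = 0. Then there exists a formal power series f(z) = λz + Σ_{n≥2} a_n z^n with all |a_n| ≤ 1 whose formal linearization h satisfies limsup_n |h_n|^{1/n} = ∞; in particular h has radius of convergence 0. -/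
open PowerSeries Filter

private lemma coeff_pow_eq_zero {f : PowerSeries ℂ} (hf : PowerSeries.constantCoeff f = 0) :
    ∀ k n : ℕ, n < k → PowerSeries.coeff n (f ^ k) = 0 := by
  intro k
  induction k with
  | zero => omega
  | succ k ih =>
    intro n hn
    rw [pow_succ, PowerSeries.coeff_mul]
    apply Finset.sum_eq_zero
    intro p hp
    rw [Finset.HasAntidiagonal.mem_antidiagonal] at hp
    rcases Nat.eq_zero_or_pos p.2 with h2 | h2
    · have : PowerSeries.coeff p.2 f = 0 := by
        rw [h2, PowerSeries.coeff_zero_eq_constantCoeff, hf]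
      rw [this, mul_zero]
    · have : PowerSeries.coeff p.1 (f ^ k) = 0 := ih p.1 (by omega)
      rw [this, zero_mul]

private lemma coeff_pow_diag_s2 {f : PowerSeries ℂ} (hf : PowerSeries.constantCoeff f = 0) :
    ∀ k : ℕ, PowerSeries.coeff k (f ^ k) = (PowerSeries.coeff 1 f) ^ k := by
  intro k
  induction k with
  | zero => simp
  | succ k ih =>
    rw [pow_succ, PowerSeries.coeff_mul]
    rw [Finset.sum_eq_single (k, 1)]
    · rw [ih, pow_succ]
    · intro p hp hne
      rw [Finset.HasAntidiagonal.mem_antidiagonal] at hp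
      rcases Nat.eq_zero_or_pos p.2 with h2 | h2
      · have : PowerSeries.coeff p.2 f = 0 := by
          rw [h2, PowerSeries.coeff_zero_eq_constantCoeff, hf]
        rw [this, mul_zero]
      · have hp1 : p.1 < k := by
          rcases Nat.lt_or_ge p.1 k with h | h
          · exact h
          · exfalso; apply hne
            have : p.1 = k := by omega
            have : p.2 = 1 := by omega
            exact Prod.ext (by omega) this
        rw [coeff_pow_eq_zero hf k p.1 hp1, zero_mul]
    · intro hmem
      exfalso; exact hmem (by rw [Finset.HasAntidiagonal.mem_antidiagonal])

private lemma coeff_pow_congr : ∀ (k : ℕ) (f g : PowerSeries ℂ) (n : ℕ),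
    (∀ m, m ≤ n → PowerSeries.coeff m f = PowerSeries.coeff m g) →
    PowerSeries.coeff n (f ^ k) = PowerSeries.coeff n (g ^ k) := by
  intro k
  induction k with
  | zero => intro f g n h; simp
  | succ k ih =>
    intro f g n h
    rw [pow_succ, pow_succ, PowerSeries.coeff_mul, PowerSeries.coeff_mul]
    apply Finset.sum_congr rfl
    intro p hp
    rw [Finset.HasAntidiagonal.mem_antidiagonal] at hp
    rw [ih f g p.1 (fun m hm => h m (by omega)), h p.2 (by omega)]

private lemma coeff_pow_congr' {f g : PowerSeries ℂ}
    (hf : PowerSeries.constantCoeff f = 0) (hg : PowerSeries.constantCoeff g = 0)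
    (k : ℕ) (hk : 2 ≤ k) (n : ℕ)
    (h : ∀ m, m < n → PowerSeries.coeff m f = PowerSeries.coeff m g) :
    PowerSeries.coeff n (f ^ k) = PowerSeries.coeff n (g ^ k) := by
  obtain ⟨j, rfl⟩ : ∃ j, k = j + 2 := ⟨k - 2, by omega⟩
  rw [show j + 2 = (j+1) + 1 from rfl, pow_succ f (j+1), pow_succ g (j+1),
    PowerSeries.coeff_mul, PowerSeries.coeff_mul]
  apply Finset.sum_congr rfl
  intro p hp
  rw [Finset.HasAntidiagonal.mem_antidiagonal] at hp
  rcases Nat.eq_zero_or_pos p.2 with h2 | h2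
  · have e1 : PowerSeries.coeff p.2 f = 0 := by
      rw [h2, PowerSeries.coeff_zero_eq_constantCoeff, hf]
    have e2 : PowerSeries.coeff p.2 g = 0 := by
      rw [h2, PowerSeries.coeff_zero_eq_constantCoeff, hg]
    rw [e1, e2, mul_zero, mul_zero]
  · rcases Nat.eq_zero_or_pos p.1 with h1 | h1
    · have e1 : PowerSeries.coeff p.1 (f ^ (j+1)) = 0 := by
        rw [h1]; exact coeff_pow_eq_zero hf (j+1) 0 (by omega)
      have e2 : PowerSeries.coeff p.1 (g ^ (j+1)) = 0 := by
        rw [h1]; exact coeff_pow_eq_zero hg (j+1) 0 (by omega)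
      rw [e1, e2, zero_mul, zero_mul]
    · rw [coeff_pow_congr (j+1) f g p.1 (fun m hm => h m (by omega)), h p.2 (by omega)]

private noncomputable def aH (lam : ℂ) (n : ℕ) : ℂ × ℂ :=
  if n = 0 then (0, 0)
  else if n = 1 then (lam, 1)
  else
    let ft : PowerSeries ℂ := PowerSeries.mk fun m => if _ : m < n then (aH lam m).1 else 0
    let hft : PowerSeries ℂ := PowerSeries.mk fun m => if _ : m < n then (aH lam m).2 else 0
    let S : ℂ := ∑ k ∈ Finset.Ico 2 n,
      PowerSeries.coeff k hft * PowerSeries.coeff n (ft ^ k)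
    let a : ℂ := if S = 0 then 1 else S / ‖S‖
    (a, (a + S) / (lam - lam ^ n))
  termination_by n

private noncomputable def fc (lam : ℂ) : PowerSeries ℂ :=
  PowerSeries.mk fun n => (aH lam n).1

private noncomputable def Sn (lam : ℂ) (n : ℕ) : ℂ :=
  ∑ k ∈ Finset.Ico 2 n, (aH lam k).2 * PowerSeries.coeff n (fc lam ^ k)

private noncomputable def An (lam : ℂ) (n : ℕ) : ℂ :=
  if Sn lam n = 0 then 1 else Sn lam n / ‖Sn lam n‖

private lemma aH_zero (lam : ℂ) : aH lam 0 = (0, 0) := by rw [aH]; simp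

private lemma aH_one (lam : ℂ) : aH lam 1 = (lam, 1) := by rw [aH]; simp

private lemma constantCoeff_fc (lam : ℂ) : PowerSeries.constantCoeff (fc lam) = 0 := by
  rw [← PowerSeries.coeff_zero_eq_constantCoeff]
  simp [fc, aH_zero]

private lemma aH_eq (lam : ℂ) {n : ℕ} (hn : 2 ≤ n) :
    aH lam n = (An lam n, (An lam n + Sn lam n) / (lam - lam ^ n)) := by
  have hS : (∑ k ∈ Finset.Ico 2 n,
      PowerSeries.coeff k (PowerSeries.mk fun m => if _ : m < n then (aH lam m).2 else 0) *
      PowerSeries.coeff n ((PowerSeries.mk fun m => if _ : m < n then (aH lam m).1 else 0) ^ k))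
      = Sn lam n := by
    apply Finset.sum_congr rfl
    intro k hk
    rw [Finset.mem_Ico] at hk
    rw [PowerSeries.coeff_mk, dif_pos hk.2]
    congr 1
    refine coeff_pow_congr' ?_ (constantCoeff_fc lam) k hk.1 n ?_
    · rw [← PowerSeries.coeff_zero_eq_constantCoeff]
      rw [PowerSeries.coeff_mk, dif_pos (by omega : (0:ℕ) < n), aH_zero]
    · intro m hm
      rw [PowerSeries.coeff_mk, dif_pos hm]
      simp [fc]
  rw [aH]
  simp only [if_neg (by omega : ¬ n = 0), if_neg (by omega : ¬ n = 1)]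
  rw [hS]
  rfl

private lemma coeff_fc_one (lam : ℂ) : PowerSeries.coeff 1 (fc lam) = lam := by
  simp [fc, aH_one]

private lemma coeff_h_eq (lam : ℂ) (hlam0 : lam ≠ 0)
    (hne : ∀ q : ℕ, 1 ≤ q → lam ^ q ≠ 1)
    (h : PowerSeries ℂ) (h0 : PowerSeries.constantCoeff h = 0)
    (h1 : PowerSeries.coeff 1 h = 1)
    (heq : compPS h (fc lam) = lam • h) :
    ∀ n, PowerSeries.coeff n h = (aH lam n).2 := by
  intro n
  induction n using Nat.strong_induction_on with
  | _ n ih =>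
    match n, ih with
    | 0, _ => rw [PowerSeries.coeff_zero_eq_constantCoeff, h0, aH_zero]
    | 1, _ => rw [h1, aH_one]
    | (m+2), ih =>
      set n := m + 2 with hn
      have hn2 : 2 ≤ n := by omega
      have E := congrArg (PowerSeries.coeff n) heq
      rw [map_smul, smul_eq_mul] at E
      rw [show compPS h (fc lam) = PowerSeries.mk fun n =>
        ∑ k ∈ Finset.range (n + 1),
          PowerSeries.coeff k h * PowerSeries.coeff n (fc lam ^ k) from rfl,
        PowerSeries.coeff_mk] at E
      rw [Finset.sum_range_succ] at E
      rw [Finset.range_eq_Ico,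
        Finset.sum_eq_sum_Ico_succ_bot (by omega : 0 < n),
        Finset.sum_eq_sum_Ico_succ_bot (by omega : 1 < n)] at E
      have e0 : PowerSeries.coeff 0 h * PowerSeries.coeff n (fc lam ^ 0) = 0 := by
        rw [PowerSeries.coeff_zero_eq_constantCoeff, h0, zero_mul]
      have e1 : PowerSeries.coeff 1 h * PowerSeries.coeff n (fc lam ^ 1) = An lam n := by
        rw [h1, pow_one, one_mul]
        have : PowerSeries.coeff n (fc lam) = (aH lam n).1 := by simp [fc]
        rw [this, aH_eq lam hn2]
      have e2 : (∑ k ∈ Finset.Ico 2 n,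
          PowerSeries.coeff k h * PowerSeries.coeff n (fc lam ^ k)) = Sn lam n := by
        apply Finset.sum_congr rfl
        intro k hk
        rw [Finset.mem_Ico] at hk
        rw [ih k hk.2]
      have e3 : PowerSeries.coeff n (fc lam ^ n) = lam ^ n := by
        rw [coeff_pow_diag_s2 (constantCoeff_fc lam), coeff_fc_one]
      rw [e0, e1, e2, e3, zero_add] at E
      -- E : An + Sn + coeff n h * lam ^ n = lam * coeff n h
      have hD : lam - lam ^ n ≠ 0 := by
        have : lam - lam ^ n = lam * (1 - lam ^ (m+1)) := by rw [hn]; ring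
        rw [this]
        apply mul_ne_zero hlam0
        intro hc
        exact hne (m+1) (by omega) (by linear_combination -hc)
      rw [aH_eq lam hn2]
      show PowerSeries.coeff n h = (An lam n + Sn lam n) / (lam - lam ^ n)
      rw [eq_div_iff hD]
      linear_combination -E

private lemma norm_An (lam : ℂ) (n : ℕ) : ‖An lam n‖ = 1 := by
  rw [An]
  split_ifs with hS
  · simp
  · rw [norm_div]
    have : ‖((‖Sn lam n‖ : ℝ) : ℂ)‖ = ‖Sn lam n‖ := by
      rw [Complex.norm_real, norm_norm]
    rw [this, div_self (norm_ne_zero_iff.mpr hS)]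

private lemma one_le_norm_AS (lam : ℂ) (n : ℕ) : 1 ≤ ‖An lam n + Sn lam n‖ := by
  by_cases hS : Sn lam n = 0
  · rw [An, if_pos hS, hS]; simp
  · rw [An, if_neg hS]
    set S := Sn lam n with hSdef
    have h1 : S / (‖S‖ : ℂ) + S = S * ((‖S‖ : ℂ)⁻¹ + 1) := by ring
    have h2 : ((‖S‖ : ℂ)⁻¹ + 1) = ((‖S‖⁻¹ + 1 : ℝ) : ℂ) := by push_cast; ring
    have hSpos : 0 < ‖S‖ := norm_pos_iff.mpr hS
    rw [h1, norm_mul, h2, Complex.norm_real, Real.norm_eq_abs,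
      abs_of_nonneg (by positivity)]
    rw [mul_add, mul_inv_cancel₀ (ne_of_gt hSpos), mul_one]
    linarith [hSpos]

private lemma norm_aH_lower (lam : ℂ) (hlam1 : ‖lam‖ = 1) (m : ℕ)
    (hne : lam ^ (m+1) ≠ 1) :
    ‖lam ^ (m+1) - 1‖⁻¹ ≤ ‖(aH lam (m+2)).2‖ := by
  have hn2 : 2 ≤ m + 2 := by omega
  rw [aH_eq lam hn2]
  show _ ≤ ‖(An lam (m+2) + Sn lam (m+2)) / (lam - lam ^ (m+2))‖
  have hD : lam - lam ^ (m+2) = lam * (1 - lam ^ (m+1)) := by ring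
  have hDnorm : ‖lam - lam ^ (m+2)‖ = ‖lam ^ (m+1) - 1‖ := by
    rw [hD, norm_mul, hlam1, one_mul, norm_sub_rev]
  have hDpos : 0 < ‖lam ^ (m+1) - 1‖ := by
    rw [norm_pos_iff]
    intro hc
    exact hne (by linear_combination hc)
  rw [norm_div, hDnorm, inv_eq_one_div]
  gcongr
  exact one_le_norm_AS lam (m+2)

/-- Cremer's divergence construction: if `λ = e^{2πiα}`, `α` irrational, and
`liminf_q |λ^q - 1|^{1/q} = 0`, then there is a formal series
`f = λ z + Σ_{n≥2} a_n z^n` with all `|a_n| ≤ 1` whose formal linearization `h`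
satisfies `limsup |h_n|^{1/n} = ∞`, i.e. has radius of convergence 0. -/
theorem cremer_divergent_linearization (α : ℝ) (hα : Irrational α)
    (lam : ℂ) (hlam : lam = Complex.exp (2 * Real.pi * Complex.I * α))
    (hliouville : ∀ ε : ℝ, 0 < ε →
      ∃ᶠ q : ℕ in atTop, ‖lam ^ q - 1‖ ^ ((q : ℝ)⁻¹) < ε) :
    ∃ f : PowerSeries ℂ,
      PowerSeries.constantCoeff f = 0 ∧ PowerSeries.coeff 1 f = lam ∧
      (∀ n : ℕ, 2 ≤ n → ‖PowerSeries.coeff n f‖ ≤ 1) ∧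
      ∀ h : PowerSeries ℂ,
        (PowerSeries.constantCoeff h = 0 ∧ PowerSeries.coeff 1 h = 1 ∧
          compPS h f = lam • h) →
        ∀ C : ℝ, ∃ᶠ n : ℕ in atTop, C < ‖PowerSeries.coeff n h‖ ^ ((n : ℝ)⁻¹) := by
  have hlam1 : ‖lam‖ = 1 := by
    rw [hlam, Complex.norm_exp]
    simp [Complex.mul_re, Complex.mul_im]
  have hlam0 : lam ≠ 0 := by rw [hlam]; exact Complex.exp_ne_zero _
  have hne : ∀ q : ℕ, 1 ≤ q → lam ^ q ≠ 1 := by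
    intro q hq hcon
    rw [hlam, ← Complex.exp_nat_mul, Complex.exp_eq_one_iff] at hcon
    obtain ⟨m, hm⟩ := hcon
    have h2 : (2 * (Real.pi : ℂ) * Complex.I) ≠ 0 := by
      simp [Real.pi_ne_zero, Complex.I_ne_zero]
    have hqa : (q : ℂ) * (α : ℂ) = (m : ℂ) := by
      apply mul_right_cancel₀ h2
      rw [← hm]; ring
    have hr : (q : ℝ) * α = (m : ℝ) := by exact_mod_cast hqa
    have hq0 : (q : ℝ) ≠ 0 := Nat.cast_ne_zero.mpr (by omega)
    apply hα
    refine ⟨(m : ℚ) / (q : ℚ), ?_⟩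
    push_cast
    field_simp
    linarith [hr]
  refine ⟨fc lam, constantCoeff_fc lam, coeff_fc_one lam, ?_, ?_⟩
  · intro n hn
    have hc : PowerSeries.coeff n (fc lam) = (aH lam n).1 := by simp [fc]
    rw [hc, aH_eq lam hn]
    show ‖An lam n‖ ≤ 1
    rw [norm_An]
  · rintro h ⟨h0, h1, heq⟩ C
    have key := coeff_h_eq lam hlam0 hne h h0 h1 heq
    have hlow : ∀ q : ℕ, 1 ≤ q → ‖lam ^ q - 1‖⁻¹ ≤ ‖PowerSeries.coeff (q+1) h‖ := by
      intro q hq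
      obtain ⟨m, rfl⟩ : ∃ m, q = m + 1 := ⟨q - 1, by omega⟩
      rw [key (m+2)]
      exact norm_aH_lower lam hlam1 m (hne (m+1) (by omega))
    set M : ℝ := max C 1 + 1 with hM
    have hM1 : 1 < M := by
      have := le_max_right C 1
      rw [hM]; linarith
    have hM0 : (0:ℝ) < M := by linarith
    have hMC : C < M := by
      have := le_max_left C 1
      rw [hM]; linarith
    have hε : (0:ℝ) < (M^2)⁻¹ := by positivity
    have freq := (hliouville ((M^2)⁻¹) hε).and_eventually (eventually_ge_atTop 1)
    have freq2 : ∃ᶠ q : ℕ in atTop,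
        C < ‖PowerSeries.coeff (q+1) h‖ ^ (((q+1 : ℕ) : ℝ)⁻¹) := by
      apply freq.mono
      rintro q ⟨hq1, hq2⟩
      set r := ‖lam ^ q - 1‖ with hr
      have hrpos : 0 < r := by
        rw [hr, norm_pos_iff]
        intro hc
        exact hne q hq2 (by linear_combination hc)
      have hq0 : (q:ℝ) ≠ 0 := Nat.cast_ne_zero.mpr (by omega)
      have hrq : r < ((M^2)⁻¹) ^ q := by
        have hp1 : (r ^ ((q:ℝ)⁻¹)) ^ q < ((M^2)⁻¹)^q :=
          pow_lt_pow_left₀ hq1 (Real.rpow_nonneg hrpos.le _) (by omega)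
        rwa [← Real.rpow_natCast (r ^ ((q:ℝ)⁻¹)) q, ← Real.rpow_mul hrpos.le,
          inv_mul_cancel₀ hq0, Real.rpow_one] at hp1
      have h2 : ((M^2)⁻¹)^q = (M^(2*q))⁻¹ := by
        rw [inv_pow, ← pow_mul]
      rw [h2] at hrq
      have h3 : M ^ (2*q) < r⁻¹ := by
        calc M ^ (2*q) = ((M ^ (2*q))⁻¹)⁻¹ := by rw [inv_inv]
        _ < r⁻¹ := by gcongr
      have hMq : (M:ℝ)^(2*q) ≤ ‖PowerSeries.coeff (q+1) h‖ :=
        le_trans h3.le (hlow q hq2)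
      calc C < M := hMC
      _ = M ^ (1:ℝ) := (Real.rpow_one M).symm
      _ ≤ M ^ (((2*q : ℕ):ℝ) * (((q+1:ℕ):ℝ))⁻¹) := by
          rw [Real.rpow_le_rpow_left_iff hM1, ← div_eq_mul_inv,
            le_div_iff₀ (by positivity)]
          have hq1' : (1:ℝ) ≤ (q:ℝ) := by exact_mod_cast hq2
          push_cast
          linarith
      _ = (M ^ (2*q : ℕ)) ^ ((((q+1:ℕ)):ℝ)⁻¹) := by
          rw [Real.rpow_mul hM0.le, Real.rpow_natCast]
      _ ≤ ‖PowerSeries.coeff (q+1) h‖ ^ ((((q+1:ℕ)):ℝ)⁻¹) :=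
          Real.rpow_le_rpow (by positivity) hMq (by positivity)
    exact (tendsto_add_atTop_nat 1).frequently freq2
end

section
/- Let λ ∈ ℂ with |λ| ≠ 1 and λ ≠ 0. Then every holomorphic germ f(z) = λz + O(z²) at 0 is holomorphically linearizable: there is a holomorphic function h on a neighborhood of 0 with h(0) = 0, h'(0) = 1, and h(f(z)) = λ h(z) on that neighborhood. -/
open Filter Metric Topology Function

/-- Koenigs' theorem in the attracting case `0 < ‖lam‖ < 1`. -/
lemma koenigs_attract (lam : ℂ) (hlam0 : lam ≠ 0) (hlam : ‖lam‖ < 1)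
    (f : ℂ → ℂ) (hf : AnalyticAt ℂ f 0) (hf0 : f 0 = 0) (hf1 : deriv f 0 = lam) :
    ∃ h : ℂ → ℂ, AnalyticAt ℂ h 0 ∧ h 0 = 0 ∧ deriv h 0 = 1 ∧
      ∀ᶠ z in nhds (0 : ℂ), h (f z) = lam * h z := by
  have hL0 : 0 < ‖lam‖ := norm_pos_iff.mpr hlam0
  set L : ℝ := ‖lam‖ with hLdef
  have hsqpos : 0 < Real.sqrt L := Real.sqrt_pos.mpr hL0
  have hsqmul : Real.sqrt L * Real.sqrt L = L := Real.mul_self_sqrt hL0.le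
  have hsqlt1 : Real.sqrt L < 1 := by nlinarith
  have hLsq : L < Real.sqrt L := by nlinarith
  obtain ⟨μ, hLμ, hμ1, hμ0, hμsq⟩ : ∃ μ : ℝ, L < μ ∧ μ < 1 ∧ 0 < μ ∧ μ ^ 2 < L := by
    refine ⟨(L + Real.sqrt L) / 2, by linarith, by linarith, by linarith, ?_⟩
    nlinarith
  obtain ⟨t, htL, ht0, ht1⟩ : ∃ t : ℝ, t * L = μ ^ 2 ∧ 0 ≤ t ∧ t < 1 := by
    refine ⟨μ ^ 2 / L, by field_simp, by positivity, (div_lt_one hL0).mpr hμsq⟩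
  -- quadratic bound on `f z - lam * z`
  obtain ⟨p, hp⟩ := id hf
  have hps : ∀ y : ℂ, p.partialSum 2 y = lam * y := by
    intro y
    have hc0 : p.coeff 0 = f 0 := hp.coeff_zero 1
    have hc1 : p.coeff 1 = lam := by rw [← hf1]; exact hp.deriv.symm
    simp [FormalMultilinearSeries.partialSum, Finset.sum_range_succ,
      FormalMultilinearSeries.apply_eq_pow_smul_coeff, hc0, hc1, hf0, smul_eq_mul]
    ring
  have hO : (fun y : ℂ => f y - lam * y) =O[nhds 0] fun y => ‖y‖ ^ 2 := by
    have := hp.isBigO_sub_partialSum_pow 2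
    refine this.congr' ?_ (EventuallyEq.refl _ _)
    filter_upwards with y
    rw [zero_add, hps]
  rw [Asymptotics.isBigO_iff] at hO
  obtain ⟨C, hC⟩ := hO
  set C' : ℝ := max C 1 with hC'def
  have hC'0 : 0 < C' := lt_of_lt_of_le one_pos (le_max_right _ _)
  have hC' : ∀ᶠ y in nhds (0:ℂ), ‖f y - lam * y‖ ≤ C' * ‖y‖ ^ 2 := by
    filter_upwards [hC] with y hy
    calc ‖f y - lam * y‖ ≤ C * ‖‖y‖ ^ 2‖ := hy
      _ ≤ C' * ‖y‖ ^ 2 := by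
          rw [Real.norm_of_nonneg (by positivity)]
          exact mul_le_mul_of_nonneg_right (le_max_left _ _) (by positivity)
  rw [Metric.eventually_nhds_iff] at hC'
  obtain ⟨ε, hε0, hεb⟩ := hC'
  obtain ⟨ε₀, hε₀0, hε₀a⟩ := Metric.eventually_nhds_iff.mp hf.eventually_analyticAt
  set r : ℝ := min ε₀ (min ε ((μ - L) / C')) with hrdef
  have hr0 : 0 < r := by
    apply lt_min hε₀0
    apply lt_min hε0
    apply div_pos (by linarith) hC'0
  have hrε₀ : r ≤ ε₀ := min_le_left _ _
  have hrε : r ≤ ε := le_trans (min_le_right _ _) (min_le_left _ _)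
  have hrμ : r ≤ (μ - L) / C' := le_trans (min_le_right _ _) (min_le_right _ _)
  -- basic facts on the ball
  have hbound : ∀ y : ℂ, ‖y‖ < r → ‖f y - lam * y‖ ≤ C' * ‖y‖ ^ 2 := by
    intro y hy
    apply hεb
    rw [dist_zero_right]
    exact lt_of_lt_of_le hy hrε
  have hfd : DifferentiableOn ℂ f (ball (0:ℂ) r) := by
    intro y hy
    rw [mem_ball_zero_iff] at hy
    have : AnalyticAt ℂ f y := hε₀a (by rw [dist_zero_right]; exact lt_of_lt_of_le hy hrε₀)
    exact this.differentiableAt.differentiableWithinAt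
  -- contraction estimate for iterates
  have hone : ∀ y : ℂ, ‖y‖ < r → ‖f y‖ ≤ μ * ‖y‖ := by
    intro y hy
    have h1 : ‖f y‖ ≤ L * ‖y‖ + C' * ‖y‖ ^ 2 := by
      calc ‖f y‖ = ‖lam * y + (f y - lam * y)‖ := by ring_nf
        _ ≤ ‖lam * y‖ + ‖f y - lam * y‖ := norm_add_le _ _
        _ ≤ L * ‖y‖ + C' * ‖y‖ ^ 2 := by
            rw [norm_mul]; exact add_le_add le_rfl (hbound y hy)
    have h2 : C' * ‖y‖ ≤ μ - L := by
      have : C' * ‖y‖ ≤ C' * ((μ - L) / C') :=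
        mul_le_mul_of_nonneg_left (le_of_lt (lt_of_lt_of_le hy hrμ)) hC'0.le
      rwa [mul_div_cancel₀ _ (ne_of_gt hC'0)] at this
    nlinarith [norm_nonneg y, sq_nonneg (‖y‖)]
  have hit : ∀ z : ℂ, z ∈ ball (0:ℂ) r → ∀ n : ℕ, ‖f^[n] z‖ ≤ μ ^ n * ‖z‖ := by
    intro z hz
    rw [mem_ball_zero_iff] at hz
    intro n
    induction n with
    | zero => simp
    | succ n ih =>
        rw [Function.iterate_succ_apply']
        have hwr : ‖f^[n] z‖ < r := by
          calc ‖f^[n] z‖ ≤ μ ^ n * ‖z‖ := ih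
            _ ≤ 1 * ‖z‖ := by
                apply mul_le_mul_of_nonneg_right _ (norm_nonneg z)
                exact pow_le_one₀ hμ0.le hμ1.le
            _ < r := by rwa [one_mul]
        calc ‖f (f^[n] z)‖ ≤ μ * ‖f^[n] z‖ := hone _ hwr
          _ ≤ μ * (μ ^ n * ‖z‖) := mul_le_mul_of_nonneg_left ih hμ0.le
          _ = μ ^ (n + 1) * ‖z‖ := by ring
  have hmem : ∀ z : ℂ, z ∈ ball (0:ℂ) r → ∀ n : ℕ, f^[n] z ∈ ball (0:ℂ) r := by
    intro z hz n
    rw [mem_ball_zero_iff] at hz ⊢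
    calc ‖f^[n] z‖ ≤ μ ^ n * ‖z‖ := hit z (mem_ball_zero_iff.mpr hz) n
      _ ≤ 1 * ‖z‖ := mul_le_mul_of_nonneg_right (pow_le_one₀ hμ0.le hμ1.le) (norm_nonneg z)
      _ < r := by rwa [one_mul]
  -- the telescoping terms
  set d : ℕ → ℂ → ℂ := fun n z => (lam ^ (n + 1))⁻¹ * (f^[n + 1] z - lam * f^[n] z) with hddef
  have hd_bound : ∀ (n : ℕ) (z : ℂ), z ∈ ball (0:ℂ) r →
      ‖d n z‖ ≤ C' / L * t ^ n * ‖z‖ ^ 2 := by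
    intro n z hz
    have hwn : ‖f^[n] z‖ ≤ μ ^ n * ‖z‖ := hit z hz n
    have hwr : ‖f^[n] z‖ < r := by
      rw [mem_ball_zero_iff] at hz
      calc ‖f^[n] z‖ ≤ μ ^ n * ‖z‖ := hwn
        _ ≤ 1 * ‖z‖ := mul_le_mul_of_nonneg_right (pow_le_one₀ hμ0.le hμ1.le) (norm_nonneg z)
        _ < r := by rwa [one_mul]
    have key : ‖f^[n + 1] z - lam * f^[n] z‖ ≤ C' * (μ ^ n * ‖z‖) ^ 2 := by
      rw [Function.iterate_succ_apply']
      calc ‖f (f^[n] z) - lam * f^[n] z‖ ≤ C' * ‖f^[n] z‖ ^ 2 := hbound _ hwr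
        _ ≤ C' * (μ ^ n * ‖z‖) ^ 2 := by
            apply mul_le_mul_of_nonneg_left _ hC'0.le
            exact pow_le_pow_left₀ (norm_nonneg _) hwn 2
    have hnorm : ‖d n z‖ = (L ^ (n + 1))⁻¹ * ‖f^[n + 1] z - lam * f^[n] z‖ := by
      rw [hddef]
      rw [norm_mul, norm_inv, norm_pow]
    rw [hnorm]
    calc (L ^ (n + 1))⁻¹ * ‖f^[n + 1] z - lam * f^[n] z‖
        ≤ (L ^ (n + 1))⁻¹ * (C' * (μ ^ n * ‖z‖) ^ 2) := by
          apply mul_le_mul_of_nonneg_left key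
          positivity
      _ = C' / L * t ^ n * ‖z‖ ^ 2 := by
          have hμ2n : (μ ^ n) ^ 2 = t ^ n * L ^ n := by
            rw [← pow_mul, mul_comm n 2, pow_mul, ← htL, mul_pow]
          rw [mul_pow, hμ2n]
          field_simp
          ring
  set u : ℕ → ℝ := fun n => C' / L * r ^ 2 * t ^ n with hudef
  have hu : Summable u := (summable_geometric_of_lt_one ht0 ht1).mul_left _
  have hd_le_u : ∀ (n : ℕ) (z : ℂ), z ∈ ball (0:ℂ) r → ‖d n z‖ ≤ u n := by
    intro n z hz
    refine le_trans (hd_bound n z hz) ?_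
    show C' / L * t ^ n * ‖z‖ ^ 2 ≤ C' / L * r ^ 2 * t ^ n
    have hzr : ‖z‖ ≤ r := (mem_ball_zero_iff.mp hz).le
    have h2 : ‖z‖ ^ 2 ≤ r ^ 2 := pow_le_pow_left₀ (norm_nonneg z) hzr 2
    have htn : (0:ℝ) ≤ t ^ n := by positivity
    nlinarith [mul_nonneg (mul_nonneg (div_nonneg hC'0.le hL0.le) htn)
      (sub_nonneg.mpr h2)]
  -- differentiability of iterates and of the terms
  have hiter_diff : ∀ n : ℕ, DifferentiableOn ℂ (fun z => f^[n] z) (ball (0:ℂ) r) := by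
    intro n
    induction n with
    | zero => exact differentiableOn_id
    | succ n ih =>
        have : DifferentiableOn ℂ (f ∘ fun z => f^[n] z) (ball (0:ℂ) r) := by
          apply DifferentiableOn.comp hfd ih
          intro z hz
          exact hmem z hz n
        refine DifferentiableOn.congr this ?_
        intro z _
        exact (Function.iterate_succ_apply' f n z)
  have hd_diff : ∀ n : ℕ, DifferentiableOn ℂ (d n) (ball (0:ℂ) r) := by
    intro n
    apply DifferentiableOn.const_mul
    exact (hiter_diff (n + 1)).sub ((hiter_diff n).const_mul lam)
  -- the limit function
  set S : ℂ → ℂ := fun z => ∑' n, d n z with hSdef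
  set h : ℂ → ℂ := fun z => z + S z with hhdef
  have hSdiff : DifferentiableOn ℂ S (ball (0:ℂ) r) :=
    Complex.differentiableOn_tsum_of_summable_norm hu hd_diff isOpen_ball hd_le_u
  have hhdiff : DifferentiableOn ℂ h (ball (0:ℂ) r) := differentiableOn_id.add hSdiff
  have hball_mem : ball (0:ℂ) r ∈ nhds (0:ℂ) := isOpen_ball.mem_nhds (mem_ball_self hr0)
  have hh_an : AnalyticAt ℂ h 0 := hhdiff.analyticAt hball_mem
  have hiter0 : ∀ n : ℕ, f^[n] (0:ℂ) = 0 := fun n => Function.iterate_fixed hf0 n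
  have hS0 : S 0 = 0 := by
    simp only [hSdef, hddef]
    simp [hiter0]
  have hh0 : h 0 = 0 := by
    simp only [hhdef, hS0, add_zero]
  -- pointwise summability and limit description
  have hsum : ∀ z : ℂ, z ∈ ball (0:ℂ) r → Summable (fun n => d n z) := by
    intro z hz
    exact Summable.of_norm_bounded hu (fun n => hd_le_u n z hz)
  have htel : ∀ (z : ℂ) (N : ℕ), z + ∑ n ∈ Finset.range N, d n z = f^[N] z / lam ^ N := by
    intro z N
    have : ∀ n : ℕ, d n z = f^[n + 1] z / lam ^ (n + 1) - f^[n] z / lam ^ n := by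
      intro n
      rw [hddef]
      field_simp
      ring
    rw [Finset.sum_congr rfl (fun n _ => this n), Finset.sum_range_sub
      (fun n => f^[n] z / lam ^ n)]
    simp
  have htend : ∀ w : ℂ, w ∈ ball (0:ℂ) r →
      Tendsto (fun N => f^[N] w / lam ^ N) atTop (nhds (h w)) := by
    intro w hw
    have h1 := (hsum w hw).hasSum.tendsto_sum_nat
    have h2 : Tendsto (fun N => w + ∑ n ∈ Finset.range N, d n w) atTop (nhds (w + S w)) :=
      h1.const_add w
    refine h2.congr ?_
    intro N
    exact htel w N
  -- the functional equation
  have hfun : ∀ z ∈ ball (0:ℂ) r, h (f z) = lam * h z := by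
    intro z hz
    have hfz : f z ∈ ball (0:ℂ) r := by
      have := hmem z hz 1
      simpa using this
    have T1 : Tendsto (fun N => f^[N] (f z) / lam ^ N) atTop (nhds (h (f z))) := htend _ hfz
    have T3 : Tendsto (fun N => lam * (f^[N + 1] z / lam ^ (N + 1))) atTop
        (nhds (lam * h z)) := by
      exact (((htend z hz).comp (tendsto_add_atTop_nat 1)).const_mul lam)
    have heqfun : (fun N => f^[N] (f z) / lam ^ N) =
        fun N => lam * (f^[N + 1] z / lam ^ (N + 1)) := by
      funext N
      rw [← Function.iterate_succ_apply]
      field_simp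
      ring
    rw [heqfun] at T1
    exact tendsto_nhds_unique T1 T3
  -- derivative at 0
  have hS_bound : ∀ z ∈ ball (0:ℂ) r, ‖S z‖ ≤ C' / L * (1 - t)⁻¹ * ‖z‖ ^ 2 := by
    intro z hz
    have h1 : ‖S z‖ ≤ ∑' n, ‖d n z‖ := norm_tsum_le_tsum_norm ((hsum z hz).norm)
    have h2 : ∑' n, ‖d n z‖ ≤ ∑' n : ℕ, C' / L * ‖z‖ ^ 2 * t ^ n := by
      apply Summable.tsum_le_tsum _ ((hsum z hz).norm) ((summable_geometric_of_lt_one ht0 ht1).mul_left _)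
      intro n
      calc ‖d n z‖ ≤ C' / L * t ^ n * ‖z‖ ^ 2 := hd_bound n z hz
        _ = C' / L * ‖z‖ ^ 2 * t ^ n := by ring
    have h3 : ∑' n : ℕ, C' / L * ‖z‖ ^ 2 * t ^ n = C' / L * ‖z‖ ^ 2 * (1 - t)⁻¹ := by
      rw [tsum_mul_left, tsum_geometric_of_lt_one ht0 ht1]
    calc ‖S z‖ ≤ ∑' n, ‖d n z‖ := h1
      _ ≤ C' / L * ‖z‖ ^ 2 * (1 - t)⁻¹ := by rw [← h3] at *; exact h2
      _ = C' / L * (1 - t)⁻¹ * ‖z‖ ^ 2 := by ring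
  have hhderiv : HasDerivAt h 1 0 := by
    rw [hasDerivAt_iff_isLittleO]
    have heq : (fun z : ℂ => h z - h 0 - (z - 0) • (1:ℂ)) = fun z => S z := by
      funext z
      simp only [hhdef, hS0, add_zero, sub_zero, smul_eq_mul, mul_one]
      ring
    rw [heq]
    have hbigO : (fun z : ℂ => S z) =O[nhds 0] fun z => ‖z‖ ^ 2 := by
      rw [Asymptotics.isBigO_iff]
      refine ⟨C' / L * (1 - t)⁻¹, ?_⟩
      filter_upwards [hball_mem] with z hz
      rw [Real.norm_of_nonneg (by positivity)]
      exact hS_bound z hz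
    have hlittleO : (fun z : ℂ => ‖z‖ ^ 2) =o[nhds 0] fun z : ℂ => z - 0 := by
      rw [Asymptotics.isLittleO_iff]
      intro c hc
      filter_upwards [ball_mem_nhds (0:ℂ) hc] with z hz
      rw [mem_ball_zero_iff] at hz
      rw [Real.norm_of_nonneg (by positivity), sub_zero]
      calc ‖z‖ ^ 2 = ‖z‖ * ‖z‖ := sq ‖z‖
        _ ≤ c * ‖z‖ := mul_le_mul_of_nonneg_right hz.le (norm_nonneg z)
    exact hbigO.trans_isLittleO (by simpa using hlittleO)
  refine ⟨h, hh_an, hh0, hhderiv.deriv, ?_⟩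
  filter_upwards [hball_mem] with z hz
  exact hfun z hz

/-- Koenigs' theorem: a holomorphic germ `f(z) = λ z + O(z²)` with `λ ≠ 0`,
`|λ| ≠ 1` is holomorphically linearizable: there is `h` holomorphic near `0`
with `h(0) = 0`, `h'(0) = 1` and `h ∘ f = λ h` near `0`. -/
theorem koenigs_linearization (lam : ℂ) (hlam0 : lam ≠ 0) (hlam1 : ‖lam‖ ≠ 1)
    (f : ℂ → ℂ) (hf : AnalyticAt ℂ f 0) (hf0 : f 0 = 0) (hf1 : deriv f 0 = lam) :
    ∃ h : ℂ → ℂ, AnalyticAt ℂ h 0 ∧ h 0 = 0 ∧ deriv h 0 = 1 ∧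
      ∀ᶠ z in nhds (0 : ℂ), h (f z) = lam * h z := by
  rcases lt_or_gt_of_ne hlam1 with hlt | hgt
  · exact koenigs_attract lam hlam0 hlt f hf hf0 hf1
  · -- repelling case: use the local inverse
    have hsd : HasStrictDerivAt f lam 0 := by
      obtain ⟨p, hp⟩ := hf
      have := hp.hasStrictDerivAt
      rwa [← hp.deriv, hf1] at this
    set g : ℂ → ℂ := hsd.localInverse f lam 0 hlam0 with hgdef
    have hleft : ∀ᶠ x in nhds (0:ℂ), g (f x) = x :=
      (hsd.hasStrictFDerivAt_equiv hlam0).eventually_left_inverse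
    have hg0 : g 0 = 0 := by
      have := hleft.self_of_nhds
      rwa [hf0] at this
    have hgd : HasStrictDerivAt g lam⁻¹ 0 := by
      have := hsd.to_localInverse (hf' := hlam0)
      rwa [hf0] at this
    -- analyticity of g at 0
    have hg_an : AnalyticAt ℂ g 0 := by
      have hcf : ContDiffAt ℂ ⊤ f 0 := hf.contDiffAt
      have hFD : HasFDerivAt f
          (↑(ContinuousLinearEquiv.unitsEquivAut ℂ (Units.mk0 lam hlam0)) : ℂ →L[ℂ] ℂ) 0 :=
        (hsd.hasStrictFDerivAt_equiv hlam0).hasFDerivAt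
      set g' : ℂ → ℂ := hcf.localInverse hFD (by simp) with hg'def
      have hg'cd : ContDiffAt ℂ ⊤ g' (f 0) := hcf.to_localInverse hFD (by simp)
      rw [hf0] at hg'cd
      obtain ⟨v, hv, hcdon⟩ := hg'cd.contDiffOn (le_refl ⊤) (by simp)
      have hg'an : AnalyticAt ℂ g' 0 := by
        obtain ⟨w, hwv, hwo, hw0⟩ := _root_.mem_nhds_iff.mp hv
        exact ((hcdon.mono hwv).differentiableOn (by simp)).analyticAt (hwo.mem_nhds hw0)
      have hg'left : ∀ᶠ x in nhds (0:ℂ), g' (f x) = x :=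
        (hcf.hasStrictFDerivAt' hFD (by simp)).eventually_left_inverse
      have huniq : ∀ᶠ y in nhds (f 0), g' y = g y :=
        (hsd.hasStrictFDerivAt_equiv hlam0).localInverse_unique hg'left
      rw [hf0] at huniq
      exact hg'an.congr huniq
    have hinv1 : ‖lam⁻¹‖ < 1 := by
      rw [norm_inv]
      exact inv_lt_one_of_one_lt₀ hgt
    obtain ⟨h, hh_an, hh0, hhd, hheq⟩ := koenigs_attract lam⁻¹ (inv_ne_zero hlam0) hinv1 g
      hg_an hg0 hgd.hasDerivAt.deriv
    refine ⟨h, hh_an, hh0, hhd, ?_⟩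
    have hcont : Filter.Tendsto f (nhds 0) (nhds 0) := by
      have := hf.continuousAt.tendsto
      rwa [hf0] at this
    filter_upwards [hleft, hcont.eventually hheq] with z h1 h2
    rw [h1] at h2
    rw [h2]
    field_simp
end

section
/- Let A ∈ GL_n(ℂ) be diagonalizable with non-resonant eigenvalues λ₁,…,λ_n (λ_j ≠ λ₁^{i₁}⋯λ_n^{i_n} for all multi-indices i with |i| ≥ 2). Then every formal map f: (ℂ^n,0) → (ℂ^n,0) with linear part A admits a unique formal linearization h with h(0)=0, D₀h = I, and h∘f = A∘h. -/
/-- Composition of multivariate formal power series: `mvComp g f` substitutes the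
formal map `f` into `g`; correct when each `f k` has zero constant term. -/
noncomputable def mvComp {n : ℕ} (g : MvPowerSeries (Fin n) ℂ)
    (f : Fin n → MvPowerSeries (Fin n) ℂ) : MvPowerSeries (Fin n) ℂ :=
  fun d => ∑ m ∈ Finset.Iic (Finsupp.equivFunOnFinite.symm
      (fun _ => d.sum fun _ v => v) : Fin n →₀ ℕ),
    MvPowerSeries.coeff m g * MvPowerSeries.coeff d (∏ k : Fin n, f k ^ m k)

namespace MvLinAux
open Finset

variable {n : ℕ}

def dg (d : Fin n →₀ ℕ) : ℕ := d.sum fun _ v => v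
lemma dg_degree (d : Fin n →₀ ℕ) : dg d = d.degree := rfl
lemma dg_add (u v : Fin n →₀ ℕ) : dg (u + v) = dg u + dg v := by
  simp [dg_degree, Finsupp.degree_eq_weight_one, map_add]
@[simp] lemma dg_zero : dg (0 : Fin n →₀ ℕ) = 0 := by simp [dg_degree]
lemma dg_eq_zero_iff (d : Fin n →₀ ℕ) : dg d = 0 ↔ d = 0 := by
  simp [dg_degree, Finsupp.degree_eq_zero_iff]
@[simp] lemma dg_single (k : Fin n) : dg (Finsupp.single k 1) = 1 := by
  rw [dg, Finsupp.sum_single_index rfl]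

lemma sub_single_add {m : Fin n →₀ ℕ} {k : Fin n} (hk : m k ≠ 0) :
    (m - Finsupp.single k 1) + Finsupp.single k 1 = m := by
  ext a
  rcases eq_or_ne a k with rfl | hak
  · simp [Finsupp.tsub_apply]
    omega
  · simp [Finsupp.tsub_apply, Finsupp.single_apply, Ne.symm hak]

lemma prod_pow_single (f : Fin n → MvPowerSeries (Fin n) ℂ) (k : Fin n) :
    (∏ l, f l ^ (Finsupp.single k 1) l) = f k := by
  rw [Finset.prod_eq_single k]
  · simp
  · intro l _ hl
    simp [Finsupp.single_apply, Ne.symm hl]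
  · simp

lemma prod_pow_split (f : Fin n → MvPowerSeries (Fin n) ℂ) {m m' : Fin n →₀ ℕ} {k : Fin n}
    (h : m = m' + Finsupp.single k 1) :
    (∏ l, f l ^ m l) = (∏ l, f l ^ m' l) * f k := by
  subst h
  rw [← prod_pow_single f k, ← Finset.prod_mul_distrib]
  apply Finset.prod_congr rfl
  intro l _
  rw [Finsupp.add_apply, pow_add]

/-- Vanishing: if all `f k` have zero constant term then `coeff d (∏ f^m) = 0`
whenever `dg d < dg m`. -/
lemma coeff_prodpow_eq_zero (f : Fin n → MvPowerSeries (Fin n) ℂ)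
    (hf0 : ∀ j, MvPowerSeries.constantCoeff (f j) = 0) :
    ∀ N (m d : Fin n →₀ ℕ), dg m = N → dg d < dg m →
      MvPowerSeries.coeff d (∏ k, f k ^ m k) = 0 := by
  intro N
  induction N using Nat.strong_induction_on with
  | _ N IH =>
    intro m d hmN hlt
    have hm0 : m ≠ 0 := by
      rintro rfl; simp at hlt
    obtain ⟨k, hk⟩ := Finsupp.support_nonempty_iff.mpr hm0
    have hk' : m k ≠ 0 := Finsupp.mem_support_iff.mp hk
    set m' : Fin n →₀ ℕ := m - Finsupp.single k 1 with hm'def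
    have hsp : m = m' + Finsupp.single k 1 := (sub_single_add hk').symm
    have hdm : dg m = dg m' + 1 := by rw [hsp, dg_add, dg_single]
    rw [prod_pow_split f hsp, MvPowerSeries.coeff_mul]
    apply Finset.sum_eq_zero
    intro p hp
    have hpd : p.1 + p.2 = d := Finset.HasAntidiagonal.mem_antidiagonal.mp hp
    rcases eq_or_ne p.2 0 with h2 | h2
    · rw [h2]
      have : MvPowerSeries.coeff (0 : Fin n →₀ ℕ) (f k) = 0 := by
        rw [MvPowerSeries.coeff_zero_eq_constantCoeff]; exact hf0 k
      rw [this, mul_zero]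
    · have h21 : 1 ≤ dg p.2 := Nat.one_le_iff_ne_zero.mpr (fun h => h2 ((dg_eq_zero_iff _).mp h))
      have hdd : dg p.1 + dg p.2 = dg d := by rw [← dg_add, hpd]
      have hlt' : dg p.1 < dg m' := by omega
      rw [IH (dg m') (by omega) m' p.1 rfl hlt', zero_mul]

lemma le_dg (k : Fin n) (d : Fin n →₀ ℕ) : d k ≤ dg d := by
  rw [dg_degree]; exact Finsupp.le_degree k d

lemma dg_eq_one {u : Fin n →₀ ℕ} (h : dg u = 1) : ∃ l, u = Finsupp.single l 1 := by
  have hu0 : u ≠ 0 := by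
    intro h0; rw [h0] at h; simp at h
  obtain ⟨l, hl⟩ := Finsupp.support_nonempty_iff.mpr hu0
  have hl1 : u l = 1 := by
    have h1 : 1 ≤ u l := Nat.one_le_iff_ne_zero.mpr (Finsupp.mem_support_iff.mp hl)
    have h2 : u l ≤ 1 := h ▸ le_dg l u
    omega
  refine ⟨l, ?_⟩
  ext a
  rcases eq_or_ne a l with rfl | hal
  · simp [hl1]
  · simp only [Finsupp.single_apply, if_neg (Ne.symm hal)]
    by_contra ha
    have hsub : ({a, l} : Finset (Fin n)) ⊆ u.support := by
      intro x hx; simp at hx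
      rcases hx with rfl | rfl
      · exact Finsupp.mem_support_iff.mpr ha
      · exact hl
    have hge : u a + u l ≤ dg u := by
      rw [dg_degree, Finsupp.degree]
      calc u a + u l = ∑ x ∈ ({a, l} : Finset (Fin n)), u x := by
            rw [Finset.sum_pair hal]
          _ ≤ _ := Finset.sum_le_sum_of_subset hsub
    have : 1 ≤ u a := Nat.one_le_iff_ne_zero.mpr ha
    omega

lemma single_eq_single_iff (k l : Fin n) :
    Finsupp.single k (1:ℕ) = Finsupp.single l 1 ↔ k = l := by
  constructor
  · intro h
    by_contra hkl
    have := DFunLike.congr_fun h k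
    rw [Finsupp.single_apply, Finsupp.single_apply, if_pos rfl, if_neg (Ne.symm hkl)] at this
    exact one_ne_zero this
  · rintro rfl; rfl

/-- Comparison: two families with zero constant terms and the same linear coefficients
have the same `coeff d (∏ ·^m)` whenever `dg d ≤ dg m`. -/
lemma coeff_prodpow_congr (f g : Fin n → MvPowerSeries (Fin n) ℂ)
    (hf0 : ∀ j, MvPowerSeries.constantCoeff (f j) = 0)
    (hg0 : ∀ j, MvPowerSeries.constantCoeff (g j) = 0)
    (h1 : ∀ j l, MvPowerSeries.coeff (Finsupp.single l 1) (f j)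
        = MvPowerSeries.coeff (Finsupp.single l 1) (g j)) :
    ∀ N (m d : Fin n →₀ ℕ), dg m = N → dg d ≤ dg m →
      MvPowerSeries.coeff d (∏ k, f k ^ m k)
        = MvPowerSeries.coeff d (∏ k, g k ^ m k) := by
  intro N
  induction N using Nat.strong_induction_on with
  | _ N IH =>
    intro m d hmN hle
    rcases eq_or_ne m 0 with rfl | hm0
    · simp
    obtain ⟨k, hk⟩ := Finsupp.support_nonempty_iff.mpr hm0
    have hk' : m k ≠ 0 := Finsupp.mem_support_iff.mp hk
    set m' : Fin n →₀ ℕ := m - Finsupp.single k 1 with hm'def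
    have hsp : m = m' + Finsupp.single k 1 := (sub_single_add hk').symm
    have hdm : dg m = dg m' + 1 := by rw [hsp, dg_add, dg_single]
    rw [prod_pow_split f hsp, prod_pow_split g hsp,
      MvPowerSeries.coeff_mul, MvPowerSeries.coeff_mul]
    apply Finset.sum_congr rfl
    intro p hp
    have hpd : p.1 + p.2 = d := Finset.HasAntidiagonal.mem_antidiagonal.mp hp
    have hdd : dg p.1 + dg p.2 = dg d := by rw [← dg_add, hpd]
    rcases eq_or_ne p.2 0 with h2 | h2
    · rw [h2]
      rw [MvPowerSeries.coeff_zero_eq_constantCoeff, hf0 k, hg0 k, mul_zero, mul_zero]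
    · have h21 : 1 ≤ dg p.2 := Nat.one_le_iff_ne_zero.mpr (fun h => h2 ((dg_eq_zero_iff _).mp h))
      rcases eq_or_ne (dg p.2) 1 with h22 | h22
      · obtain ⟨l, hl⟩ := dg_eq_one h22
        rw [hl, h1 k l, IH (dg m') (by omega) m' p.1 rfl (by omega)]
      · have hlt1 : dg p.1 < dg m' := by omega
        rw [coeff_prodpow_eq_zero f hf0 (dg m') m' p.1 rfl hlt1,
          coeff_prodpow_eq_zero g hg0 (dg m') m' p.1 rfl hlt1, zero_mul, zero_mul]



open MvPolynomial in
noncomputable def lp (A : Matrix (Fin n) (Fin n) ℂ) (k : Fin n) : MvPolynomial (Fin n) ℂ :=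
  ∑ l, MvPolynomial.C (A k l) * MvPolynomial.X l

noncomputable def Kc (A : Matrix (Fin n) (Fin n) ℂ) (m d : Fin n →₀ ℕ) : ℂ :=
  MvPolynomial.coeff d (∏ k, lp A k ^ m k)

lemma lp_isHomogeneous (A : Matrix (Fin n) (Fin n) ℂ) (k : Fin n) :
    (lp A k).IsHomogeneous 1 := by
  apply MvPolynomial.IsHomogeneous.sum
  intro l _
  exact MvPolynomial.isHomogeneous_C_mul_X (A k l) l

lemma dg_eq_sum_univ (m : Fin n →₀ ℕ) : dg m = ∑ k, m k := by
  rw [dg]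
  exact Finsupp.sum_fintype _ _ (fun _ => rfl)

lemma prodpow_isHomogeneous (A : Matrix (Fin n) (Fin n) ℂ) (m : Fin n →₀ ℕ) :
    (∏ k, lp A k ^ m k).IsHomogeneous (dg m) := by
  rw [dg_eq_sum_univ]
  refine MvPolynomial.IsHomogeneous.prod _ _ _ (fun k _ => ?_)
  simpa using (lp_isHomogeneous A k).pow (m k)

lemma Kc_eq_zero (A : Matrix (Fin n) (Fin n) ℂ) {m d : Fin n →₀ ℕ} (h : dg d ≠ dg m) :
    Kc A m d = 0 := by
  apply (prodpow_isHomogeneous A m).coeff_eq_zero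
  rwa [← dg_degree]

lemma coeff_single_lp (A : Matrix (Fin n) (Fin n) ℂ) (k l : Fin n) :
    MvPolynomial.coeff (Finsupp.single l 1) (lp A k) = A k l := by
  rw [lp, MvPolynomial.coeff_sum]
  rw [Finset.sum_eq_single l]
  · rw [MvPolynomial.coeff_C_mul, MvPolynomial.coeff_X', if_pos rfl, mul_one]
  · intro r _ hr
    rw [MvPolynomial.coeff_C_mul, MvPolynomial.coeff_X',
      if_neg (fun h => hr ((single_eq_single_iff r l).mp h)), mul_zero]
  · intro h; exact absurd (Finset.mem_univ l) h

lemma constantCoeff_lp (A : Matrix (Fin n) (Fin n) ℂ) (k : Fin n) :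
    MvPolynomial.coeff (0 : Fin n →₀ ℕ) (lp A k) = 0 := by
  rw [lp, MvPolynomial.coeff_sum]
  apply Finset.sum_eq_zero
  intro r _
  rw [MvPolynomial.coeff_C_mul, MvPolynomial.coeff_X',
    if_neg (fun h => by have := DFunLike.congr_fun h r; simp at this), mul_zero]

/-- coefficients of `∏ f^m` agree with the purely linear model `Kc` in top degree. -/
lemma coeff_prodpow_eq_Kc {A : Matrix (Fin n) (Fin n) ℂ}
    (f : Fin n → MvPowerSeries (Fin n) ℂ)
    (hf0 : ∀ j, MvPowerSeries.constantCoeff (f j) = 0)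
    (hf1 : ∀ j k, MvPowerSeries.coeff (Finsupp.single k 1) (f j) = A j k)
    {m d : Fin n →₀ ℕ} (hle : dg d ≤ dg m) :
    MvPowerSeries.coeff d (∏ k, f k ^ m k) = Kc A m d := by
  have hcoe : ∀ e : Fin n →₀ ℕ,
      MvPowerSeries.coeff e (∏ k, (lp A k : MvPowerSeries (Fin n) ℂ) ^ m k) = Kc A m e := by
    intro e
    have h2 : ((∏ k, lp A k ^ m k : MvPolynomial (Fin n) ℂ) : MvPowerSeries (Fin n) ℂ)
        = ∏ k, (lp A k : MvPowerSeries (Fin n) ℂ) ^ m k := by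
      rw [show ((∏ k, lp A k ^ m k : MvPolynomial (Fin n) ℂ) : MvPowerSeries (Fin n) ℂ)
          = MvPolynomial.coeToMvPowerSeries.ringHom (∏ k, lp A k ^ m k) from rfl, map_prod]
      simp only [map_pow, MvPolynomial.coeToMvPowerSeries.ringHom_apply]
    rw [← h2, MvPolynomial.coeff_coe, Kc]
  have hg0 : ∀ j, MvPowerSeries.constantCoeff ((lp A j : MvPowerSeries (Fin n) ℂ)) = 0 := by
    intro j
    rw [← MvPowerSeries.coeff_zero_eq_constantCoeff_apply, MvPolynomial.coeff_coe]
    exact constantCoeff_lp A j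
  have hg1 : ∀ j l, MvPowerSeries.coeff (Finsupp.single l 1) (f j)
      = MvPowerSeries.coeff (Finsupp.single l 1) ((lp A j : MvPowerSeries (Fin n) ℂ)) := by
    intro j l
    rw [MvPolynomial.coeff_coe, hf1 j l, coeff_single_lp]
  rw [coeff_prodpow_congr f (fun k => (lp A k : MvPowerSeries (Fin n) ℂ)) hf0 hg0 hg1
    (dg m) m d rfl hle, hcoe]

lemma aeval_lp (A B : Matrix (Fin n) (Fin n) ℂ) (k : Fin n) :
    MvPolynomial.aeval (lp A) (lp B k) = lp (B * A) k := by
  rw [lp, map_sum, lp]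
  have hterm : ∀ l, MvPolynomial.aeval (lp A) (MvPolynomial.C (B k l) * MvPolynomial.X l)
      = ∑ r, MvPolynomial.C (B k l * A l r) * MvPolynomial.X r := by
    intro l
    rw [map_mul, MvPolynomial.aeval_C, MvPolynomial.aeval_X, lp, Finset.mul_sum]
    apply Finset.sum_congr rfl
    intro r _
    rw [← mul_assoc]
    congr 1
    rw [show (algebraMap ℂ (MvPolynomial (Fin n) ℂ)) (B k l) = MvPolynomial.C (B k l) from rfl,
      ← map_mul]
  rw [Finset.sum_congr rfl (fun l _ => hterm l), Finset.sum_comm]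
  apply Finset.sum_congr rfl
  intro r _
  rw [← Finset.sum_mul, ← map_sum, Matrix.mul_apply]

lemma aeval_monomial_one (A : Matrix (Fin n) (Fin n) ℂ) (m : Fin n →₀ ℕ) :
    MvPolynomial.aeval (lp A) (MvPolynomial.monomial m (1:ℂ)) = ∏ k, lp A k ^ m k := by
  rw [MvPolynomial.aeval_monomial, map_one, one_mul]
  exact Finsupp.prod_fintype _ _ (fun k => pow_zero _)

noncomputable def boxF (n N : ℕ) : Fin n →₀ ℕ := Finsupp.equivFunOnFinite.symm (fun _ => N)

lemma mem_Iic_boxF {N : ℕ} {e : Fin n →₀ ℕ} :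
    e ∈ Finset.Iic (boxF n N) ↔ ∀ k, e k ≤ N := by
  rw [Finset.mem_Iic, Finsupp.le_def]
  constructor <;> intro h k <;> simpa [boxF] using h k

noncomputable def degFF (n N : ℕ) : Finset (Fin n →₀ ℕ) :=
  (Finset.Iic (boxF n N)).filter (fun e => dg e = N)

lemma mem_degFF {N : ℕ} {e : Fin n →₀ ℕ} : e ∈ degFF n N ↔ dg e = N := by
  rw [degFF, Finset.mem_filter]
  constructor
  · exact fun h => h.2
  · intro h
    refine ⟨mem_Iic_boxF.mpr (fun k => h ▸ le_dg k e), h⟩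

/-- Functoriality: the top-degree coefficient matrices compose contravariantly. -/
lemma Kc_mul (A B : Matrix (Fin n) (Fin n) ℂ) {N : ℕ} {m d : Fin n →₀ ℕ}
    (hm : dg m = N) (hd : dg d = N) :
    Kc (B * A) m d = ∑ e ∈ degFF n N, Kc B m e * Kc A e d := by
  classical
  set q : MvPolynomial (Fin n) ℂ := ∏ k, lp B k ^ m k with hq
  have hq_supp : q.support ⊆ degFF n N := by
    intro e he
    rw [mem_degFF]
    by_contra hne
    exact (MvPolynomial.mem_support_iff.mp he)
      ((prodpow_isHomogeneous B m).coeff_eq_zero (by rw [← dg_degree, hm]; exact hne))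
  have key : (∏ k, lp (B * A) k ^ m k) = MvPolynomial.aeval (lp A) q := by
    rw [hq, ← aeval_monomial_one, ← aeval_monomial_one]
    rw [show MvPolynomial.aeval (lp A) (MvPolynomial.aeval (lp B) (MvPolynomial.monomial m (1:ℂ)))
        = (MvPolynomial.aeval (lp A)).comp (MvPolynomial.aeval (lp B))
            (MvPolynomial.monomial m (1:ℂ)) from rfl]
    rw [MvPolynomial.comp_aeval]
    simp only [aeval_lp]
  rw [Kc, key]
  conv_lhs => rw [show q = ∑ e ∈ q.support, MvPolynomial.monomial e (MvPolynomial.coeff e q)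
    from q.as_sum]
  rw [map_sum, MvPolynomial.coeff_sum]
  rw [Finset.sum_subset hq_supp (fun e _ he => by
    rw [MvPolynomial.notMem_support_iff.mp he, map_zero, map_zero, MvPolynomial.coeff_zero])]
  apply Finset.sum_congr rfl
  intro e _
  rw [show (MvPolynomial.monomial e (MvPolynomial.coeff e q))
      = MvPolynomial.C (MvPolynomial.coeff e q) * MvPolynomial.monomial e 1 from by
    rw [MvPolynomial.C_mul_monomial, mul_one]]
  rw [map_mul, MvPolynomial.aeval_C, aeval_monomial_one]
  rw [show (algebraMap ℂ (MvPolynomial (Fin n) ℂ)) (MvPolynomial.coeff e q)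
      = MvPolynomial.C (MvPolynomial.coeff e q) from rfl]
  rw [MvPolynomial.coeff_C_mul]
  rfl

lemma lp_one (k : Fin n) : lp (1 : Matrix (Fin n) (Fin n) ℂ) k = MvPolynomial.X k := by
  rw [lp, Finset.sum_eq_single k]
  · rw [Matrix.one_apply_eq, map_one, one_mul]
  · intro l _ hl
    rw [Matrix.one_apply_ne (Ne.symm hl), map_zero, zero_mul]
  · intro h; exact absurd (Finset.mem_univ k) h

lemma prod_X_pow_univ (m : Fin n →₀ ℕ) :
    (∏ k, (MvPolynomial.X k : MvPolynomial (Fin n) ℂ) ^ m k) = MvPolynomial.monomial m 1 := by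
  rw [← MvPolynomial.prod_X_pow_eq_monomial]
  apply (Finset.prod_subset (Finset.subset_univ m.support) _).symm
  intro k _ hk
  rw [Finsupp.notMem_support_iff.mp hk, pow_zero]

lemma Kc_one (m d : Fin n →₀ ℕ) :
    Kc (1 : Matrix (Fin n) (Fin n) ℂ) m d = if m = d then 1 else 0 := by
  rw [Kc, Finset.prod_congr rfl (fun k _ => by rw [lp_one]),
    prod_X_pow_univ, MvPolynomial.coeff_monomial]

lemma lp_diagonal (lam : Fin n → ℂ) (k : Fin n) :
    lp (Matrix.diagonal lam) k = MvPolynomial.C (lam k) * MvPolynomial.X k := by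
  rw [lp, Finset.sum_eq_single k]
  · rw [Matrix.diagonal_apply_eq]
  · intro l _ hl
    rw [Matrix.diagonal_apply_ne _ (Ne.symm hl), map_zero, zero_mul]
  · intro h; exact absurd (Finset.mem_univ k) h

lemma Kc_diagonal (lam : Fin n → ℂ) (m d : Fin n →₀ ℕ) :
    Kc (Matrix.diagonal lam) m d = if m = d then ∏ k, lam k ^ m k else 0 := by
  rw [Kc]
  have : (∏ k, lp (Matrix.diagonal lam) k ^ m k)
      = MvPolynomial.C (∏ k, lam k ^ m k) * MvPolynomial.monomial m 1 := by
    rw [Finset.prod_congr rfl (fun k _ => by rw [lp_diagonal, mul_pow, ← map_pow]),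
      Finset.prod_mul_distrib, ← map_prod, prod_X_pow_univ]
  rw [this, MvPolynomial.coeff_C_mul, MvPolynomial.coeff_monomial]
  split_ifs <;> simp


def Tt (n N : ℕ) := {d : Fin n →₀ ℕ // dg d = N}

noncomputable instance (N : ℕ) : Fintype (Tt n N) :=
  Fintype.ofFinset (degFF n N) (fun _ => mem_degFF)

instance (N : ℕ) : DecidableEq (Tt n N) := Subtype.instDecidableEq

noncomputable def MM (A : Matrix (Fin n) (Fin n) ℂ) (N : ℕ) : Matrix (Tt n N) (Tt n N) ℂ :=
  fun d m => Kc A m.1 d.1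

lemma sum_Tt (N : ℕ) (g : (Fin n →₀ ℕ) → ℂ) :
    ∑ e : Tt n N, g e.1 = ∑ e ∈ degFF n N, g e :=
  (Finset.sum_subtype _ (fun _ => mem_degFF) g).symm

lemma MM_mul (A B : Matrix (Fin n) (Fin n) ℂ) (N : ℕ) :
    MM A N * MM B N = MM (B * A) N := by
  ext d m
  rw [Matrix.mul_apply]
  simp only [MM]
  rw [Kc_mul A B m.2 d.2, ← sum_Tt N (fun e => Kc B m.1 e * Kc A e d.1)]
  apply Finset.sum_congr rfl
  intro e _
  rw [mul_comm]

lemma MM_one (N : ℕ) : MM (1 : Matrix (Fin n) (Fin n) ℂ) N = 1 := by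
  ext d m
  simp only [MM, Kc_one, Matrix.one_apply]
  by_cases h : d = m
  · subst h; rw [if_pos rfl, if_pos rfl]
  · rw [if_neg (fun hh => h (Subtype.ext hh.symm)), if_neg h]

lemma MM_diagonal (lam : Fin n → ℂ) (N : ℕ) :
    MM (Matrix.diagonal lam) N
      = Matrix.diagonal (fun d : Tt n N => ∏ k, lam k ^ (d.1 k)) := by
  ext d m
  simp only [MM, Kc_diagonal, Matrix.diagonal_apply]
  by_cases h : d = m
  · subst h; rw [if_pos rfl, if_pos rfl]
  · rw [if_neg (fun hh => h (Subtype.ext hh.symm)), if_neg h]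

open Kronecker

noncomputable def SS (A : Matrix (Fin n) (Fin n) ℂ) (N : ℕ) :
    Matrix (Tt n N × Fin n) (Tt n N × Fin n) ℂ :=
  (MM A N) ⊗ₖ (1 : Matrix (Fin n) (Fin n) ℂ) - (1 : Matrix (Tt n N) (Tt n N) ℂ) ⊗ₖ A

lemma SS_isUnit_det {A P : Matrix (Fin n) (Fin n) ℂ} {lam : Fin n → ℂ} {N : ℕ}
    (hP : IsUnit P.det) (hA : A = P * Matrix.diagonal lam * P⁻¹)
    (hres : ∀ i : Fin n →₀ ℕ, 2 ≤ dg i → ∀ j, lam j ≠ ∏ k, lam k ^ i k)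
    (hN : 2 ≤ N) : IsUnit (SS A N).det := by
  set D : Matrix (Fin n) (Fin n) ℂ := Matrix.diagonal lam with hD
  set U : Matrix (Tt n N × Fin n) (Tt n N × Fin n) ℂ := (MM (P⁻¹) N) ⊗ₖ P with hU
  set V : Matrix (Tt n N × Fin n) (Tt n N × Fin n) ℂ := (MM P N) ⊗ₖ P⁻¹ with hV
  set Δ : Matrix (Tt n N × Fin n) (Tt n N × Fin n) ℂ :=
    (MM D N) ⊗ₖ (1 : Matrix (Fin n) (Fin n) ℂ) - (1 : Matrix (Tt n N) (Tt n N) ℂ) ⊗ₖ D with hΔ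
  have hPP : P * P⁻¹ = 1 := Matrix.mul_nonsing_inv P hP
  have hUV : U * V = 1 := by
    rw [hU, hV, ← Matrix.mul_kronecker_mul, MM_mul, hPP, MM_one, Matrix.one_kronecker_one]
  have hfact : SS A N = U * Δ * V := by
    rw [hΔ, Matrix.mul_sub, Matrix.sub_mul, hU, hV,
      ← Matrix.mul_kronecker_mul, ← Matrix.mul_kronecker_mul,
      ← Matrix.mul_kronecker_mul, ← Matrix.mul_kronecker_mul,
      mul_one, mul_one, MM_mul, MM_mul, MM_mul, hPP, MM_one, SS, ← mul_assoc, ← hA]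
  have hDiag : Δ = Matrix.diagonal
      (fun p : Tt n N × Fin n => (∏ k, lam k ^ (p.1.1 k)) - lam p.2) := by
    rw [hΔ, MM_diagonal, hD,
      show (1 : Matrix (Fin n) (Fin n) ℂ) = Matrix.diagonal (fun _ => 1) from
        Matrix.diagonal_one.symm,
      show (1 : Matrix (Tt n N) (Tt n N) ℂ) = Matrix.diagonal (fun _ => 1) from
        Matrix.diagonal_one.symm,
      Matrix.diagonal_kronecker_diagonal, Matrix.diagonal_kronecker_diagonal,
      Matrix.diagonal_sub]
    ext p q
    by_cases h : p = q
    · subst h; simp [Matrix.diagonal_apply_eq]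
    · rw [Matrix.diagonal_apply_ne _ h, Matrix.diagonal_apply_ne _ h]
  have hΔdet : Δ.det ≠ 0 := by
    rw [hDiag, Matrix.det_diagonal]
    rw [Finset.prod_ne_zero_iff]
    intro p _
    refine sub_ne_zero_of_ne (Ne.symm ?_)
    exact hres p.1.1 (by rw [p.1.2]; exact hN) p.2
  have hdet : (SS A N).det = U.det * Δ.det * V.det := by
    rw [hfact, Matrix.det_mul, Matrix.det_mul]
  have hUVdet : U.det * V.det = 1 := by
    rw [← Matrix.det_mul, hUV, Matrix.det_one]
  rw [isUnit_iff_ne_zero, hdet]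
  exact mul_ne_zero (mul_ne_zero (left_ne_zero_of_mul_eq_one hUVdet) hΔdet)
    (right_ne_zero_of_mul_eq_one hUVdet)



noncomputable def lowF (n N : ℕ) : Finset (Fin n →₀ ℕ) :=
  (Finset.Iic (boxF n N)).filter (fun e => dg e < N)

noncomputable def bv (f : Fin n → MvPowerSeries (Fin n) ℂ) (N : ℕ)
    (prev : (Fin n →₀ ℕ) → Fin n → ℂ) : Tt n N × Fin n → ℂ :=
  fun p => - ∑ e ∈ lowF n N, prev e p.2 * MvPowerSeries.coeff p.1.1 (∏ k, f k ^ e k)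

noncomputable def cAux (A : Matrix (Fin n) (Fin n) ℂ) (f : Fin n → MvPowerSeries (Fin n) ℂ) :
    ℕ → (Fin n →₀ ℕ) → Fin n → ℂ
  | 0 => fun _ _ => 0
  | (N+1) => fun d j =>
    if dg d < N then cAux A f N d j
    else if hd : dg d = N then
      (if N = 0 then 0
       else if N = 1 then (if d = Finsupp.single j 1 then 1 else 0)
       else ((SS A N)⁻¹).mulVec (bv f N (cAux A f N)) (⟨d, hd⟩, j))
    else 0

noncomputable def cc (A : Matrix (Fin n) (Fin n) ℂ) (f : Fin n → MvPowerSeries (Fin n) ℂ)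
    (d : Fin n →₀ ℕ) (j : Fin n) : ℂ :=
  cAux A f (dg d + 1) d j

lemma cAux_eq_cc (A : Matrix (Fin n) (Fin n) ℂ) (f : Fin n → MvPowerSeries (Fin n) ℂ) :
    ∀ N (d : Fin n →₀ ℕ) (j : Fin n), dg d < N → cAux A f N d j = cc A f d j := by
  intro N
  induction N with
  | zero => intro d j h; omega
  | succ N IH =>
    intro d j h
    have h' : dg d < N ∨ dg d = N := by omega
    rcases h' with h' | h'
    · rw [show cAux A f (N+1) d j = if dg d < N then cAux A f N d j else
        (if hd : dg d = N then
          (if N = 0 then 0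
           else if N = 1 then (if d = Finsupp.single j 1 then 1 else 0)
           else ((SS A N)⁻¹).mulVec (bv f N (cAux A f N)) (⟨d, hd⟩, j))
         else 0) from rfl, if_pos h']
      exact IH d j h'
    · rw [cc, h']

lemma cc_zero (A : Matrix (Fin n) (Fin n) ℂ) (f : Fin n → MvPowerSeries (Fin n) ℂ) (j : Fin n) :
    cc A f 0 j = 0 := by
  rw [cc]
  simp only [dg_zero]
  rfl

lemma cc_dgzero (A : Matrix (Fin n) (Fin n) ℂ) (f : Fin n → MvPowerSeries (Fin n) ℂ)
    {d : Fin n →₀ ℕ} (hd : dg d = 0) (j : Fin n) : cc A f d j = 0 := by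
  rw [(dg_eq_zero_iff d).mp hd]
  exact cc_zero A f j

lemma cc_single (A : Matrix (Fin n) (Fin n) ℂ) (f : Fin n → MvPowerSeries (Fin n) ℂ)
    (k j : Fin n) :
    cc A f (Finsupp.single k 1) j = if k = j then 1 else 0 := by
  rw [cc]
  simp only [dg_single]
  rw [show cAux A f 2 (Finsupp.single k 1) j = if dg (Finsupp.single k 1) < 1 then
      cAux A f 1 (Finsupp.single k 1) j
    else if hd : dg (Finsupp.single k 1) = 1 then
      (if (1:ℕ) = 0 then 0
       else if (1:ℕ) = 1 then (if Finsupp.single k 1 = Finsupp.single j 1 then 1 else 0)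
       else ((SS A 1)⁻¹).mulVec (bv f 1 (cAux A f 1)) (⟨Finsupp.single k 1, hd⟩, j))
    else 0 from rfl]
  rw [if_neg (by rw [dg_single]; omega), dif_pos (dg_single k), if_neg one_ne_zero, if_pos rfl]
  by_cases h : k = j
  · rw [if_pos h, if_pos ((single_eq_single_iff k j).mpr h)]
  · rw [if_neg h, if_neg (fun hh => h ((single_eq_single_iff k j).mp hh))]

lemma cc_dgone (A : Matrix (Fin n) (Fin n) ℂ) (f : Fin n → MvPowerSeries (Fin n) ℂ)
    {d : Fin n →₀ ℕ} (hd : dg d = 1) (j : Fin n) :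
    cc A f d j = if d = Finsupp.single j 1 then 1 else 0 := by
  obtain ⟨l, rfl⟩ := dg_eq_one hd
  rw [cc_single]
  by_cases h : l = j
  · rw [if_pos h, if_pos ((single_eq_single_iff l j).mpr h)]
  · rw [if_neg h, if_neg (fun hh => h ((single_eq_single_iff l j).mp hh))]

lemma cc_big (A : Matrix (Fin n) (Fin n) ℂ) (f : Fin n → MvPowerSeries (Fin n) ℂ)
    {N : ℕ} (hN : 2 ≤ N) {d : Fin n →₀ ℕ} (hd : dg d = N) (j : Fin n) :
    cc A f d j = ((SS A N)⁻¹).mulVec (bv f N (cAux A f N)) (⟨d, hd⟩, j) := by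
  rw [cc, hd]
  rw [show cAux A f (N+1) d j = if dg d < N then cAux A f N d j else
      (if hd : dg d = N then
        (if N = 0 then 0
         else if N = 1 then (if d = Finsupp.single j 1 then 1 else 0)
         else ((SS A N)⁻¹).mulVec (bv f N (cAux A f N)) (⟨d, hd⟩, j))
       else 0) from rfl]
  rw [if_neg (by omega), dif_pos hd, if_neg (by omega), if_neg (by omega)]

lemma bv_cAux_eq (A : Matrix (Fin n) (Fin n) ℂ) (f : Fin n → MvPowerSeries (Fin n) ℂ)
    (N : ℕ) : bv f N (cAux A f N) = bv f N (cc A f) := by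
  funext p
  rw [bv, bv]
  congr 1
  apply Finset.sum_congr rfl
  intro e he
  have : dg e < N := (Finset.mem_filter.mp he).2
  rw [cAux_eq_cc A f N e p.2 this]

/-- The block of `cc` in degree `N ≥ 2` is obtained by inverting `SS`. -/
lemma cc_block (A : Matrix (Fin n) (Fin n) ℂ) (f : Fin n → MvPowerSeries (Fin n) ℂ)
    {N : ℕ} (hN : 2 ≤ N) :
    (fun p : Tt n N × Fin n => cc A f p.1.1 p.2)
      = ((SS A N)⁻¹).mulVec (bv f N (cc A f)) := by
  funext p
  rw [cc_big A f hN p.1.2 p.2, bv_cAux_eq]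
  congr

lemma SS_mulVec_apply (A : Matrix (Fin n) (Fin n) ℂ) (N : ℕ)
    (x : Tt n N × Fin n → ℂ) (d : Tt n N) (j : Fin n) :
    (SS A N).mulVec x (d, j)
      = (∑ m : Tt n N, Kc A m.1 d.1 * x (m, j)) - ∑ k, A j k * x (d, k) := by
  rw [Matrix.mulVec, dotProduct, Fintype.sum_prod_type]
  have hterm : ∀ m k, SS A N (d, j) (m, k) * x (m, k)
      = (if j = k then Kc A m.1 d.1 * x (m, k) else 0)
        - (if d = m then A j k * x (m, k) else 0) := by
    intro m k
    rw [SS, Matrix.sub_apply, Matrix.kroneckerMap_apply, Matrix.kroneckerMap_apply,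
      Matrix.one_apply, Matrix.one_apply, sub_mul]
    congr 1
    · simp only [MM]
      split_ifs
      · ring
      · ring
    · split_ifs
      · ring
      · ring
  rw [Finset.sum_congr rfl (fun m _ => Finset.sum_congr rfl (fun k _ => hterm m k))]
  rw [Finset.sum_congr rfl (fun m (_ : m ∈ Finset.univ) => Finset.sum_sub_distrib
    (s := Finset.univ) _ _)]
  rw [Finset.sum_sub_distrib]
  congr 1
  · apply Finset.sum_congr rfl
    intro m _
    rw [Finset.sum_ite_eq Finset.univ j (fun k => Kc A m.1 d.1 * x (m, k)),
      if_pos (Finset.mem_univ j)]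
  · rw [Finset.sum_comm]
    apply Finset.sum_congr rfl
    intro k _
    rw [Finset.sum_ite_eq Finset.univ d (fun m => A j k * x (m, k)),
      if_pos (Finset.mem_univ d)]


lemma prod_pow_single_poly (g : Fin n → MvPolynomial (Fin n) ℂ) (k : Fin n) :
    (∏ l, g l ^ (Finsupp.single k 1) l) = g k := by
  rw [Finset.prod_eq_single k]
  · simp
  · intro l _ hl
    simp [Finsupp.single_apply, Ne.symm hl]
  · simp

lemma Kc_single (A : Matrix (Fin n) (Fin n) ℂ) (j : Fin n) (e : Fin n →₀ ℕ) :
    Kc A (Finsupp.single j 1) e = MvPolynomial.coeff e (lp A j) := by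
  rw [Kc, prod_pow_single_poly]

lemma lowF_zero : lowF n 0 = ∅ := by
  ext e
  simp [lowF]

/-- Main splitting of the `mvComp` coefficient sum into lower and top degree parts. -/
lemma coeff_mvComp_split (A : Matrix (Fin n) (Fin n) ℂ)
    (f : Fin n → MvPowerSeries (Fin n) ℂ)
    (hf0 : ∀ j, MvPowerSeries.constantCoeff (f j) = 0)
    (hf1 : ∀ j k, MvPowerSeries.coeff (Finsupp.single k 1) (f j) = A j k)
    (g : MvPowerSeries (Fin n) ℂ) (d : Fin n →₀ ℕ) :
    MvPowerSeries.coeff d (mvComp g f)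
      = (∑ e ∈ lowF n (dg d),
          MvPowerSeries.coeff e g * MvPowerSeries.coeff d (∏ k, f k ^ e k))
        + ∑ m : Tt n (dg d), Kc A m.1 d * MvPowerSeries.coeff m.1 g := by
  rw [MvPowerSeries.coeff_apply]
  rw [show mvComp g f d = ∑ m ∈ Finset.Iic (boxF n (dg d)),
      MvPowerSeries.coeff m g * MvPowerSeries.coeff d (∏ k, f k ^ m k) from rfl]
  rw [← Finset.sum_filter_add_sum_filter_not (Finset.Iic (boxF n (dg d)))
    (fun e => dg e < dg d)]
  congr 1
  rw [← Finset.sum_filter_add_sum_filter_not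
    ((Finset.Iic (boxF n (dg d))).filter (fun e => ¬ dg e < dg d)) (fun e => dg e = dg d)]
  have hzero : ∑ e ∈ ((Finset.Iic (boxF n (dg d))).filter
      (fun e => ¬ dg e < dg d)).filter (fun e => ¬ dg e = dg d),
      MvPowerSeries.coeff e g * MvPowerSeries.coeff d (∏ k, f k ^ e k) = 0 := by
    apply Finset.sum_eq_zero
    intro e he
    rw [Finset.mem_filter] at he
    have h1 := (Finset.mem_filter.mp he.1).2
    have h2 := he.2
    rw [coeff_prodpow_eq_zero f hf0 (dg e) e d rfl (by omega), mul_zero]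
  rw [hzero, add_zero]
  have hset : ((Finset.Iic (boxF n (dg d))).filter (fun e => ¬ dg e < dg d)).filter
      (fun e => dg e = dg d) = degFF n (dg d) := by
    ext e
    rw [Finset.mem_filter, Finset.mem_filter, mem_degFF]
    constructor
    · exact fun h => h.2
    · intro h
      exact ⟨⟨(Finset.mem_filter.mp (mem_degFF.mpr h)).1, by omega⟩, h⟩
  rw [hset, sum_Tt (dg d) (fun e => Kc A e d * MvPowerSeries.coeff e g)]
  apply Finset.sum_congr rfl
  intro m hm
  rw [coeff_prodpow_eq_Kc f hf0 hf1 (le_of_eq (mem_degFF.mp hm).symm), mul_comm]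

theorem main_theorem (n : ℕ)
    (A : Matrix (Fin n) (Fin n) ℂ) (hA : IsUnit A.det)
    (lam : Fin n → ℂ)
    (hdiag : ∃ P : Matrix (Fin n) (Fin n) ℂ, IsUnit P.det ∧
      A = P * Matrix.diagonal lam * P⁻¹)
    (hres : ∀ i : Fin n →₀ ℕ, 2 ≤ i.sum (fun _ v => v) →
      ∀ j : Fin n, lam j ≠ ∏ k : Fin n, lam k ^ i k)
    (f : Fin n → MvPowerSeries (Fin n) ℂ)
    (hf0 : ∀ j : Fin n, MvPowerSeries.constantCoeff (f j) = 0)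
    (hf1 : ∀ j k : Fin n,
      MvPowerSeries.coeff (Finsupp.single k 1) (f j) = A j k) :
    ∃! h : Fin n → MvPowerSeries (Fin n) ℂ,
      (∀ j : Fin n, MvPowerSeries.constantCoeff (h j) = 0) ∧
      (∀ j k : Fin n, MvPowerSeries.coeff (Finsupp.single k 1) (h j)
        = if j = k then 1 else 0) ∧
      ∀ j : Fin n, mvComp (h j) f = ∑ k : Fin n, A j k • h k := by
  classical
  obtain ⟨P, hP, hAP⟩ := hdiag
  have hres' : ∀ i : Fin n →₀ ℕ, 2 ≤ dg i → ∀ j : Fin n,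
      lam j ≠ ∏ k : Fin n, lam k ^ i k := hres
  have hSdet : ∀ N, 2 ≤ N → IsUnit (SS (n := n) A N).det :=
    fun N hN => SS_isUnit_det hP hAP hres' hN
  -- the candidate solution
  set h₀ : Fin n → MvPowerSeries (Fin n) ℂ := fun j => (fun d => cc A f d j) with hh₀
  have hcoeff₀ : ∀ d j, MvPowerSeries.coeff d (h₀ j) = cc A f d j := fun d j => rfl
  have hRHS : ∀ (h : Fin n → MvPowerSeries (Fin n) ℂ) (j : Fin n) (d : Fin n →₀ ℕ),
      MvPowerSeries.coeff d (∑ k, A j k • h k)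
        = ∑ k, A j k * MvPowerSeries.coeff d (h k) := by
    intro h j d
    rw [map_sum]
    apply Finset.sum_congr rfl
    intro k _
    rw [map_smul, smul_eq_mul]
  -- existence
  have hP0 : ∀ j, MvPowerSeries.constantCoeff (h₀ j) = 0 := by
    intro j
    rw [← MvPowerSeries.coeff_zero_eq_constantCoeff_apply, hcoeff₀, cc_zero]
  have hP1 : ∀ j k, MvPowerSeries.coeff (Finsupp.single k 1) (h₀ j)
      = if j = k then 1 else 0 := by
    intro j k
    rw [hcoeff₀, cc_single]
    by_cases h : j = k
    · rw [if_pos h.symm, if_pos h]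
    · rw [if_neg (fun hh => h hh.symm), if_neg h]
  have hsol : ∀ j, mvComp (h₀ j) f = ∑ k, A j k • h₀ k := by
    intro j
    apply MvPowerSeries.ext
    intro d
    rw [coeff_mvComp_split A f hf0 hf1, hRHS]
    simp only [hcoeff₀]
    rcases Nat.lt_or_ge (dg d) 2 with hN2 | hN2
    · rcases (by omega : dg d = 0 ∨ dg d = 1) with h0 | h1
      · -- degree 0
        have e1 : ∑ e ∈ lowF n (dg d), cc A f e j
            * MvPowerSeries.coeff d (∏ k, f k ^ e k) = 0 := by
          apply Finset.sum_eq_zero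
          intro e he
          have : dg e < dg d := (Finset.mem_filter.mp he).2
          omega
        have e2 : ∑ m : Tt n (dg d), Kc A m.1 d * cc A f m.1 j = 0 := by
          apply Finset.sum_eq_zero
          intro m _
          rw [cc_dgzero A f (by rw [m.2]; exact h0) j, mul_zero]
        have e3 : ∑ k, A j k * cc A f d k = 0 := by
          apply Finset.sum_eq_zero
          intro k _
          rw [cc_dgzero A f h0 k, mul_zero]
        rw [e1, e2, e3, add_zero]
      · -- degree 1
        obtain ⟨k0, hk0⟩ := dg_eq_one h1
        have e1 : ∑ e ∈ lowF n (dg d), cc A f e j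
            * MvPowerSeries.coeff d (∏ k, f k ^ e k) = 0 := by
          apply Finset.sum_eq_zero
          intro e he
          have hlt : dg e < dg d := (Finset.mem_filter.mp he).2
          rw [cc_dgzero A f (by omega) j, zero_mul]
        have e2 : ∑ m : Tt n (dg d), Kc A m.1 d * cc A f m.1 j = A j k0 := by
          have hsum := Finset.sum_eq_single_of_mem
            (f := fun m : Tt n (dg d) => Kc A m.1 d * cc A f m.1 j)
            (⟨Finsupp.single j 1, by rw [dg_single, h1]⟩ : Tt n (dg d))
            (Finset.mem_univ _)
            (fun m _ hm => by
              show Kc A m.1 d * cc A f m.1 j = 0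
              rw [cc_dgone A f (by rw [m.2]; exact h1) j,
                if_neg (fun hh => hm (Subtype.ext hh)), mul_zero])
          rw [hsum]
          show Kc A (Finsupp.single j 1) d * cc A f (Finsupp.single j 1) j = A j k0
          rw [Kc_single, hk0, coeff_single_lp, cc_single, if_pos rfl, mul_one]
        have e3 : ∑ k, A j k * cc A f d k = A j k0 := by
          have : ∀ k, A j k * cc A f d k = if k0 = k then A j k else 0 := by
            intro k
            rw [hk0, cc_single]
            split_ifs with h
            · rw [mul_one]
            · rw [mul_zero]
          rw [Finset.sum_congr rfl (fun k _ => this k),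
            Finset.sum_ite_eq Finset.univ k0 (fun k => A j k), if_pos (Finset.mem_univ k0)]
        rw [e1, e2, e3, zero_add]
    · -- degree ≥ 2
      have hx : (SS A (dg d)).mulVec (fun p : Tt n (dg d) × Fin n => cc A f p.1.1 p.2)
          = bv f (dg d) (cc A f) := by
        rw [cc_block A f hN2, Matrix.mulVec_mulVec,
          Matrix.mul_nonsing_inv _ (hSdet (dg d) hN2), Matrix.one_mulVec]
      have hrow := congrFun hx (⟨d, rfl⟩, j)
      erw [SS_mulVec_apply] at hrow
      rw [show bv f (dg d) (cc A f) ((⟨d, rfl⟩ : Tt n (dg d)), j)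
          = - ∑ e ∈ lowF n (dg d), cc A f e j
              * MvPowerSeries.coeff d (∏ k, f k ^ e k) from rfl] at hrow
      linear_combination hrow
  -- uniqueness: any solution has coefficients `cc`
  have huniq : ∀ h : Fin n → MvPowerSeries (Fin n) ℂ,
      (∀ j, MvPowerSeries.constantCoeff (h j) = 0) →
      (∀ j k, MvPowerSeries.coeff (Finsupp.single k 1) (h j) = if j = k then 1 else 0) →
      (∀ j, mvComp (h j) f = ∑ k, A j k • h k) →
      ∀ N (d : Fin n →₀ ℕ), dg d = N → ∀ j,
        MvPowerSeries.coeff d (h j) = cc A f d j := by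
    intro h h0 h1 heq N
    induction N using Nat.strong_induction_on with
    | _ N IH =>
      intro d hdN j
      rcases Nat.lt_or_ge N 2 with hN2 | hN2
      · rcases (by omega : N = 0 ∨ N = 1) with hc | hc
        · have hd0 : d = 0 := (dg_eq_zero_iff d).mp (by omega)
          rw [hd0, MvPowerSeries.coeff_zero_eq_constantCoeff_apply, h0 j, cc_zero]
        · obtain ⟨k0, hk0⟩ := dg_eq_one (by omega : dg d = 1)
          rw [hk0, h1 j k0, cc_single]
          by_cases hjk : j = k0
          · rw [if_pos hjk, if_pos hjk.symm]
          · rw [if_neg hjk, if_neg (fun hh => hjk hh.symm)]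
      · -- degree ≥ 2 block
        have hblockrow : ∀ p : Tt n N × Fin n,
            (SS A N).mulVec (fun q : Tt n N × Fin n =>
              MvPowerSeries.coeff q.1.1 (h q.2)) p = bv f N (cc A f) p := by
          rintro ⟨⟨e, he⟩, i⟩
          erw [SS_mulVec_apply]
          have hsplit := coeff_mvComp_split A f hf0 hf1 (h i) e
          rw [heq i, hRHS] at hsplit
          have hlow : ∑ e' ∈ lowF n (dg e),
              MvPowerSeries.coeff e' (h i)
                * MvPowerSeries.coeff e (∏ k, f k ^ e' k)
              = ∑ e' ∈ lowF n (dg e), cc A f e' i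
                * MvPowerSeries.coeff e (∏ k, f k ^ e' k) := by
            apply Finset.sum_congr rfl
            intro e' he'
            have hlt : dg e' < dg e := (Finset.mem_filter.mp he').2
            rw [IH (dg e') (by omega) e' rfl i]
          rw [hlow] at hsplit
          rw [show bv f N (cc A f) ((⟨e, he⟩ : Tt n N), i)
              = - ∑ e' ∈ lowF n N, cc A f e' i
                  * MvPowerSeries.coeff e (∏ k, f k ^ e' k) from rfl]
          rw [show dg e = N from he] at hsplit
          linear_combination -hsplit
        have hxeq : (fun q : Tt n N × Fin n => MvPowerSeries.coeff q.1.1 (h q.2))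
            = ((SS A N)⁻¹).mulVec (bv f N (cc A f)) := by
          have h2 : (SS A N).mulVec (fun q : Tt n N × Fin n =>
              MvPowerSeries.coeff q.1.1 (h q.2)) = bv f N (cc A f) := funext hblockrow
          rw [← h2, Matrix.mulVec_mulVec, Matrix.nonsing_inv_mul _ (hSdet N hN2),
            Matrix.one_mulVec]
        have := congrFun hxeq (⟨d, hdN⟩, j)
        rw [this, ← congrFun (cc_block A f hN2) ((⟨d, hdN⟩ : Tt n N), j)]
  -- assemble
  refine ⟨h₀, ⟨hP0, hP1, hsol⟩, ?_⟩
  rintro h ⟨h0, h1, heq⟩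
  funext j
  apply MvPowerSeries.ext
  intro d
  rw [huniq h h0 h1 heq (dg d) d rfl j, hcoeff₀]

end MvLinAux

/-- For `A ∈ GLₙ(ℂ)` diagonalizable with non-resonant eigenvalues `λ₁,…,λₙ`,
every formal map `f : (ℂⁿ,0) → (ℂⁿ,0)` with linear part `A` admits a unique
formal linearization `h` with `h(0)=0`, `D₀h = I`, `h ∘ f = A ∘ h`. -/
theorem mv_formal_linearization_exists_unique (n : ℕ)
    (A : Matrix (Fin n) (Fin n) ℂ) (hA : IsUnit A.det)
    (lam : Fin n → ℂ)
    (hdiag : ∃ P : Matrix (Fin n) (Fin n) ℂ, IsUnit P.det ∧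
      A = P * Matrix.diagonal lam * P⁻¹)
    (hres : ∀ i : Fin n →₀ ℕ, 2 ≤ i.sum (fun _ v => v) →
      ∀ j : Fin n, lam j ≠ ∏ k : Fin n, lam k ^ i k)
    (f : Fin n → MvPowerSeries (Fin n) ℂ)
    (hf0 : ∀ j : Fin n, MvPowerSeries.constantCoeff (f j) = 0)
    (hf1 : ∀ j k : Fin n,
      MvPowerSeries.coeff (Finsupp.single k 1) (f j) = A j k) :
    ∃! h : Fin n → MvPowerSeries (Fin n) ℂ,
      (∀ j : Fin n, MvPowerSeries.constantCoeff (h j) = 0) ∧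
      (∀ j k : Fin n, MvPowerSeries.coeff (Finsupp.single k 1) (h j)
        = if j = k then 1 else 0) ∧
      ∀ j : Fin n, mvComp (h j) f = ∑ k : Fin n, A j k • h k := by
  exact MvLinAux.main_theorem n A hA lam hdiag hres f hf0 hf1
end
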